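/- arXiv:2408.14031 — 2 statements merged into one kernel-verified Lean document; each statement's English description precedes it below -/
import Mathlib

section
/- Syntactic context equivalence coincides with semantic equivalence (Proposition on graph comparison): for all typing contexts Γ₁ and Γ₂ with interpretations ⟦Γ₁⟧ = 𝔊₁; S₁ and ⟦Γ₂⟧ = 𝔊₂; S₂, one has Γ₁ ≡ Γ₂ if and only if 𝔊₁ ≃ 𝔊₂ and S₁ = S₂. -/
set_option autoImplicit false
set_option linter.unusedVariables false

namespace LawOrder

/-! ## Graph representations -/

structure Graph (B : Type) where
  n : ℕ
  label : ℕ → B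
  edge : ℕ → ℕ → Prop
  edge_lt : ∀ i j, edge i j → i < n ∧ j < n

namespace Graph

variable {B : Type}

/-- The edge relation is acyclic. -/
def Acyclic (G : Graph B) : Prop := ∀ i, ¬ Relation.TransGen G.edge i i

/-- The empty graph representation. -/
def zero (B : Type) [Inhabited B] : Graph B :=
  ⟨0, fun _ => default, fun _ _ => False, fun _ _ h => h.elim⟩

/-- Union of two graph representations: disjoint union, second part shifted. -/
def union (G₁ G₂ : Graph B) : Graph B where
  n := G₁.n + G₂.n
  label := fun i => if i < G₁.n then G₁.label i else G₂.label (i - G₁.n)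
  edge := fun i j =>
    G₁.edge i j ∨ (G₁.n ≤ i ∧ G₁.n ≤ j ∧ G₂.edge (i - G₁.n) (j - G₁.n))
  edge_lt := by
    intro i j h
    rcases h with h | ⟨hi, hj, h⟩
    · have := G₁.edge_lt i j h; omega
    · have := G₂.edge_lt _ _ h; omega

/-- Join of two graph representations: union plus all edges from the first
    part to the second part. -/
def join (G₁ G₂ : Graph B) : Graph B where
  n := G₁.n + G₂.n
  label := fun i => if i < G₁.n then G₁.label i else G₂.label (i - G₁.n)
  edge := fun i j =>
    G₁.edge i j ∨ (G₁.n ≤ i ∧ G₁.n ≤ j ∧ G₂.edge (i - G₁.n) (j - G₁.n)) ∨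
      (i < G₁.n ∧ G₁.n ≤ j ∧ j < G₁.n + G₂.n)
  edge_lt := by
    intro i j h
    rcases h with h | ⟨hi, hj, h⟩ | ⟨hi, hj₁, hj₂⟩
    · have := G₁.edge_lt i j h; omega
    · have := G₂.edge_lt _ _ h; omega
    · omega

/-- Isomorphism of graph representations. -/
def Iso (G₁ G₂ : Graph B) : Prop :=
  G₁.n = G₂.n ∧ ∃ f : Fin G₁.n → Fin G₁.n, Function.Bijective f ∧
    (∀ i j : Fin G₁.n, G₁.edge (f i).val (f j).val ↔ G₂.edge i.val j.val) ∧
    (∀ i : Fin G₁.n, G₁.label (f i).val = G₂.label i.val)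

/-- `G₁` is a spanning graph representation of `G₂`: same vertices and labels,
    and the edges of `G₁` are contained in those of `G₂`. -/
def Spanning (G₁ G₂ : Graph B) : Prop :=
  G₁.n = G₂.n ∧ (∀ i, i < G₁.n → G₁.label i = G₂.label i) ∧
    ∀ i j, G₁.edge i j → G₂.edge i j

/-- `f` is a topological ordering of `G`: `f` enumerates the vertices so that
    edges always point forward. -/
def IsTopOrder (G : Graph B) (f : Equiv.Perm (Fin G.n)) : Prop :=
  ∀ i j : Fin G.n, G.edge i.val j.val → f.symm i < f.symm j

/-- `G` has exactly one topological ordering. -/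
def Traceable (G : Graph B) : Prop :=
  ∃! f : Equiv.Perm (Fin G.n), G.IsTopOrder f

/-- The identity enumeration is a topological ordering: all edges increase. -/
def TopOrdered (G : Graph B) : Prop := ∀ i j, G.edge i j → i < j

/-- `k` is a union cut of `G`: no edge crosses from below `k` to `k` or above. -/
def UnionCut (G : Graph B) (k : ℕ) : Prop :=
  0 < k ∧ k < G.n ∧ ∀ i j, i < k → k ≤ j → ¬ G.edge i j

/-- `k` is a join cut of `G`: every pair crossing from below `k` to `k` or
    above (within range) is an edge. -/
def JoinCut (G : Graph B) (k : ℕ) : Prop :=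
  0 < k ∧ k < G.n ∧ ∀ i j, i < k → k ≤ j → j < G.n → G.edge i j

/-- Lower part of the index cut at `k`. -/
def cutLo (G : Graph B) (k : ℕ) : Graph B where
  n := k
  label := G.label
  edge := fun i j => G.edge i j ∧ i < k ∧ j < k
  edge_lt := fun i j h => ⟨h.2.1, h.2.2⟩

/-- Upper part of the index cut at `k` (re-indexed from 0). -/
def cutHi (G : Graph B) (k : ℕ) : Graph B where
  n := G.n - k
  label := fun i => G.label (i + k)
  edge := fun i j => G.edge (i + k) (j + k)
  edge_lt := by
    intro i j h
    have := G.edge_lt _ _ h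
    omega

/-- Weak connectedness: any two vertices are joined by an undirected path. -/
def WeaklyConnected (G : Graph B) : Prop :=
  ∀ i j, i < G.n → j < G.n →
    Relation.ReflTransGen (fun a b => G.edge a b ∨ G.edge b a) i j

/-- Union of a nonempty sequence of graph representations. -/
def unionList (G : Graph B) (L : List (Graph B)) : Graph B :=
  L.foldl union G

end Graph

/-! ## Contexts built from bindings with ordered and unordered composition -/

inductive GCtx (B : Type) where
  | empty : GCtx B
  | bind : B → GCtx B
  | comma : GCtx B → GCtx B → GCtx B
  | par : GCtx B → GCtx B → GCtx B

/-- Context patterns: contexts with a single hole. -/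
inductive GPat (B : Type) where
  | hole : GPat B
  | commaL : GPat B → GCtx B → GPat B
  | commaR : GCtx B → GPat B → GPat B
  | parL : GPat B → GCtx B → GPat B
  | parR : GCtx B → GPat B → GPat B

def GPat.fill {B : Type} : GPat B → GCtx B → GCtx B
  | .hole, Γ => Γ
  | .commaL G Δ, Γ => .comma (G.fill Γ) Δ
  | .commaR Δ G, Γ => .comma Δ (G.fill Γ)
  | .parL G Δ, Γ => .par (G.fill Γ) Δ
  | .parR Δ G, Γ => .par Δ (G.fill Γ)

def GCtx.toList {B : Type} : GCtx B → List B
  | .empty => []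
  | .bind b => [b]
  | .comma Γ₁ Γ₂ => Γ₁.toList ++ Γ₂.toList
  | .par Γ₁ Γ₂ => Γ₁.toList ++ Γ₂.toList

/-- Graph part of the interpretation of a context: unrestricted bindings
    contribute no vertex, ordered bindings one vertex; `comma` is join,
    `par` is union. -/
def GCtx.interpG {B : Type} [Inhabited B] (unr : B → Bool) : GCtx B → Graph B
  | .empty => Graph.zero B
  | .bind b =>
      if unr b then Graph.zero B
      else ⟨1, fun _ => b, fun _ _ => False, fun _ _ h => h.elim⟩
  | .comma Γ₁ Γ₂ => (interpG unr Γ₁).join (interpG unr Γ₂)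
  | .par Γ₁ Γ₂ => (interpG unr Γ₁).union (interpG unr Γ₂)

/-- Set part of the interpretation of a context: the set of its
    unrestricted bindings. -/
def GCtx.unrSet {B : Type} (unr : B → Bool) : GCtx B → Set B
  | .empty => ∅
  | .bind b => if unr b then {b} else ∅
  | .comma Γ₁ Γ₂ => unrSet unr Γ₁ ∪ unrSet unr Γ₂
  | .par Γ₁ Γ₂ => unrSet unr Γ₁ ∪ unrSet unr Γ₂

/-! ## Syntactic equivalence of contexts: the least congruence generated by
    the monoid laws for `,`, the commutative monoid laws for `∥`, and the
    rules for unrestricted bindings. -/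

inductive CtxEquiv {B : Type} (unr : B → Bool) : GCtx B → GCtx B → Prop where
  | commaIdL : ∀ Γ : GCtx B, CtxEquiv unr (GCtx.comma GCtx.empty Γ) Γ
  | commaIdR : ∀ Γ : GCtx B, CtxEquiv unr (GCtx.comma Γ GCtx.empty) Γ
  | commaAssoc : ∀ Γ₁ Γ₂ Γ₃ : GCtx B,
      CtxEquiv unr (GCtx.comma Γ₁ (GCtx.comma Γ₂ Γ₃))
        (GCtx.comma (GCtx.comma Γ₁ Γ₂) Γ₃)
  | parId : ∀ Γ : GCtx B, CtxEquiv unr (GCtx.par GCtx.empty Γ) Γ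
  | parComm : ∀ Γ₁ Γ₂ : GCtx B, CtxEquiv unr (GCtx.par Γ₁ Γ₂) (GCtx.par Γ₂ Γ₁)
  | parAssoc : ∀ Γ₁ Γ₂ Γ₃ : GCtx B,
      CtxEquiv unr (GCtx.par Γ₁ (GCtx.par Γ₂ Γ₃)) (GCtx.par (GCtx.par Γ₁ Γ₂) Γ₃)
  | unrMove : ∀ (G : GPat B) (b : B), unr b = true →
      CtxEquiv unr (GPat.fill G (GCtx.bind b))
        (GCtx.par (GPat.fill G GCtx.empty) (GCtx.bind b))
  | unrDemote : ∀ b : B, unr b = true →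
      CtxEquiv unr (GCtx.par (GCtx.bind b) (GCtx.bind b)) (GCtx.bind b)
  | congr : ∀ (G : GPat B) (Γ₁ Γ₂ : GCtx B), CtxEquiv unr Γ₁ Γ₂ →
      CtxEquiv unr (GPat.fill G Γ₁) (GPat.fill G Γ₂)
  | refl : ∀ Γ : GCtx B, CtxEquiv unr Γ Γ
  | symm : ∀ Γ₁ Γ₂ : GCtx B, CtxEquiv unr Γ₂ Γ₁ → CtxEquiv unr Γ₁ Γ₂
  | trans : ∀ Γ₁ Γ₂ Γ₃ : GCtx B,
      CtxEquiv unr Γ₁ Γ₂ → CtxEquiv unr Γ₂ Γ₃ → CtxEquiv unr Γ₁ Γ₃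


namespace Graph

variable {B : Type}

/- ===== aux from here ===== -/

lemma union_n (G₁ G₂ : Graph B) : (G₁.union G₂).n = G₁.n + G₂.n := rfl
lemma join_n (G₁ G₂ : Graph B) : (G₁.join G₂).n = G₁.n + G₂.n := rfl

lemma union_edge_iff (G₁ G₂ : Graph B) (i j : ℕ) :
    (G₁.union G₂).edge i j ↔
      (i < G₁.n ∧ j < G₁.n ∧ G₁.edge i j) ∨
      (G₁.n ≤ i ∧ i < G₁.n + G₂.n ∧ G₁.n ≤ j ∧ j < G₁.n + G₂.n ∧
        G₂.edge (i - G₁.n) (j - G₁.n)) := by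
  constructor
  · rintro (h | ⟨hi, hj, h⟩)
    · have := G₁.edge_lt _ _ h; exact Or.inl ⟨this.1, this.2, h⟩
    · have := G₂.edge_lt _ _ h; exact Or.inr ⟨hi, by omega, hj, by omega, h⟩
  · rintro (⟨_, _, h⟩ | ⟨hi, _, hj, _, h⟩)
    · exact Or.inl h
    · exact Or.inr ⟨hi, hj, h⟩

lemma join_edge_iff (G₁ G₂ : Graph B) (i j : ℕ) :
    (G₁.join G₂).edge i j ↔
      (i < G₁.n ∧ j < G₁.n ∧ G₁.edge i j) ∨
      (G₁.n ≤ i ∧ i < G₁.n + G₂.n ∧ G₁.n ≤ j ∧ j < G₁.n + G₂.n ∧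
        G₂.edge (i - G₁.n) (j - G₁.n)) ∨
      (i < G₁.n ∧ G₁.n ≤ j ∧ j < G₁.n + G₂.n) := by
  constructor
  · rintro (h | ⟨hi, hj, h⟩ | h)
    · have := G₁.edge_lt _ _ h; exact Or.inl ⟨this.1, this.2, h⟩
    · have := G₂.edge_lt _ _ h; exact Or.inr (Or.inl ⟨hi, by omega, hj, by omega, h⟩)
    · exact Or.inr (Or.inr h)
  · rintro (⟨_, _, h⟩ | ⟨hi, _, hj, _, h⟩ | h)
    · exact Or.inl h
    · exact Or.inr (Or.inl ⟨hi, hj, h⟩)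
    · exact Or.inr (Or.inr h)

lemma union_label_lo (G₁ G₂ : Graph B) {i : ℕ} (h : i < G₁.n) :
    (G₁.union G₂).label i = G₁.label i := if_pos h

lemma union_label_hi (G₁ G₂ : Graph B) {i : ℕ} (h : G₁.n ≤ i) :
    (G₁.union G₂).label i = G₂.label (i - G₁.n) := if_neg (by omega)

lemma join_label_lo (G₁ G₂ : Graph B) {i : ℕ} (h : i < G₁.n) :
    (G₁.join G₂).label i = G₁.label i := if_pos h

lemma join_label_hi (G₁ G₂ : Graph B) {i : ℕ} (h : G₁.n ≤ i) :
    (G₁.join G₂).label i = G₂.label (i - G₁.n) := if_neg (by omega)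

lemma iso_mk {G₁ G₂ : Graph B} (hn : G₁.n = G₂.n) (g : ℕ → ℕ)
    (hlt : ∀ i, i < G₁.n → g i < G₁.n)
    (hinj : ∀ i j, i < G₁.n → j < G₁.n → g i = g j → i = j)
    (hedge : ∀ i j, i < G₁.n → j < G₁.n → (G₁.edge (g i) (g j) ↔ G₂.edge i j))
    (hlab : ∀ i, i < G₁.n → G₁.label (g i) = G₂.label i) : G₁.Iso G₂ := by
  refine ⟨hn, fun i => ⟨g i.val, hlt _ i.isLt⟩, ?_, ?_, ?_⟩
  · rw [Fintype.bijective_iff_injective_and_card]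
    refine ⟨?_, rfl⟩
    intro a b hab
    exact Fin.ext (hinj _ _ a.isLt b.isLt (by simpa using congrArg Fin.val hab))
  · intro i j; exact hedge _ _ i.isLt j.isLt
  · intro i; exact hlab _ i.isLt

lemma iso_elim {G₁ G₂ : Graph B} (h : G₁.Iso G₂) :
    G₁.n = G₂.n ∧ ∃ g : ℕ → ℕ,
      (∀ i, i < G₁.n → g i < G₁.n) ∧
      (∀ i j, i < G₁.n → j < G₁.n → g i = g j → i = j) ∧
      (∀ j, j < G₁.n → ∃ i, i < G₁.n ∧ g i = j) ∧
      (∀ i j, i < G₁.n → j < G₁.n → (G₁.edge (g i) (g j) ↔ G₂.edge i j)) ∧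
      (∀ i, i < G₁.n → G₁.label (g i) = G₂.label i) := by
  obtain ⟨hn, f, hb, he, hl⟩ := h
  refine ⟨hn, fun i => if hi : i < G₁.n then (f ⟨i, hi⟩).val else i, ?_, ?_, ?_, ?_, ?_⟩
  · intro i hi; simp only [dif_pos hi]; exact (f ⟨i, hi⟩).isLt
  · intro i j hi hj hij
    simp only [dif_pos hi, dif_pos hj] at hij
    have := hb.injective (a₁ := ⟨i, hi⟩) (a₂ := ⟨j, hj⟩) (Fin.ext hij)
    exact congrArg Fin.val this
  · intro j hj
    obtain ⟨i, hi⟩ := hb.surjective ⟨j, hj⟩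
    exact ⟨i.val, i.isLt, by simp only [dif_pos i.isLt]; rw [Fin.eta, hi]⟩
  · intro i j hi hj
    simp only [dif_pos hi, dif_pos hj]
    exact he ⟨i, hi⟩ ⟨j, hj⟩
  · intro i hi
    simp only [dif_pos hi]
    exact hl ⟨i, hi⟩

lemma iso_refl (G : Graph B) : G.Iso G :=
  iso_mk rfl id (fun _ h => h) (fun _ _ _ _ h => h) (fun _ _ _ _ => Iff.rfl)
    (fun _ _ => rfl)

lemma iso_symm {G₁ G₂ : Graph B} (h : G₁.Iso G₂) : G₂.Iso G₁ := by
  obtain ⟨hn, g, hlt, hinj, hsurj, he, hl⟩ := iso_elim h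
  rw [hn] at hlt hinj hsurj he hl
  choose inv hinv1 hinv2 using hsurj
  refine iso_mk hn.symm (fun i => if h : i < G₂.n then inv i h else i) ?_ ?_ ?_ ?_
  · intro i hi; simp only [dif_pos hi]; exact hinv1 i hi
  · intro i j hi hj hij
    simp only [dif_pos hi, dif_pos hj] at hij
    rw [← hinv2 i hi, ← hinv2 j hj, hij]
  · intro i j hi hj
    simp only [dif_pos hi, dif_pos hj]
    rw [← he _ _ (hinv1 i hi) (hinv1 j hj), hinv2 i hi, hinv2 j hj]
  · intro i hi
    simp only [dif_pos hi]
    rw [← hl _ (hinv1 i hi), hinv2 i hi]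

lemma iso_trans {G₁ G₂ G₃ : Graph B} (h₁ : G₁.Iso G₂) (h₂ : G₂.Iso G₃) :
    G₁.Iso G₃ := by
  obtain ⟨hn1, g₁, hlt1, hinj1, hsurj1, he1, hl1⟩ := iso_elim h₁
  obtain ⟨hn2, g₂, hlt2, hinj2, hsurj2, he2, hl2⟩ := iso_elim h₂
  rw [← hn1] at hlt2 hinj2 he2 hl2
  refine iso_mk (hn1.trans hn2) (g₁ ∘ g₂) ?_ ?_ ?_ ?_
  · intro i hi; exact hlt1 _ (hlt2 _ hi)
  · intro i j hi hj hij
    exact hinj2 _ _ hi hj (hinj1 _ _ (hlt2 _ hi) (hlt2 _ hj) hij)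
  · intro i j hi hj
    rw [Function.comp, Function.comp, he1 _ _ (hlt2 _ hi) (hlt2 _ hj),
      he2 _ _ hi hj]
  · intro i hi
    rw [Function.comp, hl1 _ (hlt2 _ hi), hl2 _ hi]

lemma iso_of_n_zero {G₁ G₂ : Graph B} (h₁ : G₁.n = 0) (h₂ : G₂.n = 0) :
    G₁.Iso G₂ :=
  iso_mk (h₁.trans h₂.symm) id (fun i hi => hi)
    (fun _ _ _ _ h => h) (fun i j hi _ => by omega) (fun i hi => by omega)

lemma iso_n_eq {G₁ G₂ : Graph B} (h : G₁.Iso G₂) : G₁.n = G₂.n := h.1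

lemma join_nzero {B : Type} {G₁ G₂ : Graph B} (h : G₂.n = 0) : (G₁.join G₂).Iso G₁ := by
  have hn : (G₁.join G₂).n = G₁.n := by rw [join_n]; omega
  refine iso_mk hn id (fun i hi => by simpa only [id_eq] using hi)
    (fun i j _ _ hh => by simpa only [id_eq] using hh) ?_ ?_
  · intro i j hi hj
    rw [hn] at hi hj
    simp only [id_eq, join_edge_iff]
    constructor
    · rintro (⟨_, _, hh⟩ | ⟨_, _, _, _, _⟩ | ⟨_, _, _⟩) <;> first | assumption | omega
    · intro hh; exact Or.inl ⟨by omega, by omega, hh⟩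
  · intro i hi
    rw [hn] at hi
    simp only [id_eq]
    exact join_label_lo _ _ hi

lemma nzero_join {B : Type} {G₁ G₂ : Graph B} (h : G₁.n = 0) : (G₁.join G₂).Iso G₂ := by
  have hn : (G₁.join G₂).n = G₂.n := by rw [join_n]; omega
  refine iso_mk hn id (fun i hi => by simpa only [id_eq] using hi)
    (fun i j _ _ hh => by simpa only [id_eq] using hh) ?_ ?_
  · intro i j hi hj
    rw [hn] at hi hj
    simp only [id_eq, join_edge_iff]
    constructor
    · rintro (⟨_, _, _⟩ | ⟨_, _, _, _, hh⟩ | ⟨_, _, _⟩)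
      · omega
      · rw [h, Nat.sub_zero, Nat.sub_zero] at hh; exact hh
      · omega
    · intro hh
      exact Or.inr (Or.inl ⟨by omega, by omega, by omega, by omega,
        by rw [h, Nat.sub_zero, Nat.sub_zero]; exact hh⟩)
  · intro i hi
    rw [hn] at hi
    simp only [id_eq]
    rw [join_label_hi _ _ (by omega), h, Nat.sub_zero]

lemma union_nzero {B : Type} {G₁ G₂ : Graph B} (h : G₂.n = 0) : (G₁.union G₂).Iso G₁ := by
  have hn : (G₁.union G₂).n = G₁.n := by rw [union_n]; omega
  refine iso_mk hn id (fun i hi => by simpa only [id_eq] using hi)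
    (fun i j _ _ hh => by simpa only [id_eq] using hh) ?_ ?_
  · intro i j hi hj
    rw [hn] at hi hj
    simp only [id_eq, union_edge_iff]
    constructor
    · rintro (⟨_, _, hh⟩ | ⟨_, _, _, _, _⟩) <;> first | assumption | omega
    · intro hh; exact Or.inl ⟨by omega, by omega, hh⟩
  · intro i hi
    rw [hn] at hi
    simp only [id_eq]
    exact union_label_lo _ _ hi

lemma nzero_union {B : Type} {G₁ G₂ : Graph B} (h : G₁.n = 0) : (G₁.union G₂).Iso G₂ := by
  have hn : (G₁.union G₂).n = G₂.n := by rw [union_n]; omega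
  refine iso_mk hn id (fun i hi => by simpa only [id_eq] using hi)
    (fun i j _ _ hh => by simpa only [id_eq] using hh) ?_ ?_
  · intro i j hi hj
    rw [hn] at hi hj
    simp only [id_eq, union_edge_iff]
    constructor
    · rintro (⟨_, _, _⟩ | ⟨_, _, _, _, hh⟩)
      · omega
      · rw [h, Nat.sub_zero, Nat.sub_zero] at hh; exact hh
    · intro hh
      exact Or.inr ⟨by omega, by omega, by omega, by omega,
        by rw [h, Nat.sub_zero, Nat.sub_zero]; exact hh⟩
  · intro i hi
    rw [hn] at hi
    simp only [id_eq]
    rw [union_label_hi _ _ (by omega), h, Nat.sub_zero]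

lemma union_comm_iso {B : Type} (G₁ G₂ : Graph B) : (G₁.union G₂).Iso (G₂.union G₁) := by
  have hn : (G₁.union G₂).n = (G₂.union G₁).n := by rw [union_n, union_n]; omega
  have hn' : (G₁.union G₂).n = G₁.n + G₂.n := union_n _ _
  refine iso_mk hn (fun i => if i < G₂.n then i + G₁.n else i - G₂.n) ?_ ?_ ?_ ?_
  · intro i hi; rw [hn'] at hi ⊢; beta_reduce; split <;> omega
  · intro i j hi hj hij; rw [hn'] at hi hj
    beta_reduce at hij
    split at hij <;> split at hij <;> omega
  · intro i j hi hj; rw [hn'] at hi hj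
    beta_reduce
    rw [union_edge_iff, union_edge_iff G₂ G₁]
    split <;> split <;>
      (constructor <;>
        · rintro (⟨a1, a2, hh⟩ | ⟨a1, a2, a3, a4, hh⟩) <;>
          first
            | exact Or.inl ⟨by omega, by omega, by convert hh using 2 <;> omega⟩
            | exact Or.inr ⟨by omega, by omega, by omega, by omega,
                by convert hh using 2 <;> omega⟩
            | (exfalso; omega))
  · intro i hi; rw [hn'] at hi
    beta_reduce
    split
    · rename_i hlt
      rw [union_label_hi _ _ (by omega), union_label_lo _ _ (by omega)]
      congr 1; omega
    · rename_i hge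
      rw [union_label_lo _ _ (by omega), union_label_hi _ _ (by omega)]

lemma union_assoc_iso {B : Type} (G₁ G₂ G₃ : Graph B) :
    (G₁.union (G₂.union G₃)).Iso ((G₁.union G₂).union G₃) := by
  have hn : (G₁.union (G₂.union G₃)).n = G₁.n + G₂.n + G₃.n := by
    simp only [union_n]; omega
  have e3 : ∀ x : ℕ, x - (G₁.n + G₂.n) = x - G₁.n - G₂.n := fun x => by omega
  refine iso_mk (by simp only [union_n]; omega) id
    (fun i hi => by simpa only [id_eq] using hi)
    (fun i j _ _ hh => by simpa only [id_eq] using hh) ?_ ?_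
  · intro i j hi hj
    rw [hn] at hi hj
    simp only [id_eq, union_edge_iff, union_n, e3]
    constructor
    · rintro (⟨h1, h2, hh⟩ | ⟨h1, h2, h3, h4, (⟨a1, a2, hh⟩ | ⟨a1, a2, a3, a4, hh⟩)⟩)
      · exact Or.inl ⟨by omega, by omega, Or.inl ⟨by omega, by omega, hh⟩⟩
      · exact Or.inl ⟨by omega, by omega, Or.inr ⟨by omega, by omega, by omega, by omega, hh⟩⟩
      · exact Or.inr ⟨by omega, by omega, by omega, by omega, hh⟩
    · rintro (⟨h1, h2, (⟨a1, a2, hh⟩ | ⟨a1, a2, a3, a4, hh⟩)⟩ | ⟨h1, h2, h3, h4, hh⟩)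
      · exact Or.inl ⟨by omega, by omega, hh⟩
      · exact Or.inr ⟨by omega, by omega, by omega, by omega,
          Or.inl ⟨by omega, by omega, hh⟩⟩
      · exact Or.inr ⟨by omega, by omega, by omega, by omega,
          Or.inr ⟨by omega, by omega, by omega, by omega, hh⟩⟩
  · intro i hi
    rw [hn] at hi
    simp only [id_eq]
    by_cases h1 : i < G₁.n
    · rw [union_label_lo (G₁.union G₂) G₃ (by rw [union_n]; omega),
        union_label_lo G₁ G₂ h1, union_label_lo G₁ (G₂.union G₃) h1]
    · by_cases h2 : i < G₁.n + G₂.n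
      · rw [union_label_lo (G₁.union G₂) G₃ (by rw [union_n]; omega),
          union_label_hi G₁ G₂ (by omega), union_label_hi G₁ (G₂.union G₃) (by omega),
          union_label_lo G₂ G₃ (by omega)]
      · rw [union_label_hi (G₁.union G₂) G₃ (by rw [union_n]; omega),
          union_label_hi G₁ (G₂.union G₃) (by omega),
          union_label_hi G₂ G₃ (by omega), union_n, e3]

lemma join_assoc_iso {B : Type} (G₁ G₂ G₃ : Graph B) :
    (G₁.join (G₂.join G₃)).Iso ((G₁.join G₂).join G₃) := by
  have hn : (G₁.join (G₂.join G₃)).n = G₁.n + G₂.n + G₃.n := by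
    simp only [join_n]; omega
  have e3 : ∀ x : ℕ, x - (G₁.n + G₂.n) = x - G₁.n - G₂.n := fun x => by omega
  refine iso_mk (by simp only [join_n]; omega) id
    (fun i hi => by simpa only [id_eq] using hi)
    (fun i j _ _ hh => by simpa only [id_eq] using hh) ?_ ?_
  · intro i j hi hj
    rw [hn] at hi hj
    simp only [id_eq, join_edge_iff, join_n, e3]
    constructor
    · rintro (⟨h1, h2, hh⟩ |
        ⟨h1, h2, h3, h4, (⟨a1, a2, hh⟩ | ⟨a1, a2, a3, a4, hh⟩ | ⟨a1, a2, a3⟩)⟩ |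
        ⟨h1, h2, h3⟩)
      · exact Or.inl ⟨by omega, by omega, Or.inl ⟨by omega, by omega, hh⟩⟩
      · exact Or.inl ⟨by omega, by omega,
          Or.inr (Or.inl ⟨by omega, by omega, by omega, by omega, hh⟩)⟩
      · exact Or.inr (Or.inl ⟨by omega, by omega, by omega, by omega, hh⟩)
      · exact Or.inr (Or.inr ⟨by omega, by omega, by omega⟩)
      · by_cases hj2 : j < G₁.n + G₂.n
        · exact Or.inl ⟨by omega, by omega, Or.inr (Or.inr ⟨by omega, by omega, by omega⟩)⟩
        · exact Or.inr (Or.inr ⟨by omega, by omega, by omega⟩)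
    · rintro (⟨h1, h2, (⟨a1, a2, hh⟩ | ⟨a1, a2, a3, a4, hh⟩ | ⟨a1, a2, a3⟩)⟩ |
        ⟨h1, h2, h3, h4, hh⟩ | ⟨h1, h2, h3⟩)
      · exact Or.inl ⟨by omega, by omega, hh⟩
      · exact Or.inr (Or.inl ⟨by omega, by omega, by omega, by omega,
          Or.inl ⟨by omega, by omega, hh⟩⟩)
      · exact Or.inr (Or.inr ⟨by omega, by omega, by omega⟩)
      · exact Or.inr (Or.inl ⟨by omega, by omega, by omega, by omega,
          Or.inr (Or.inl ⟨by omega, by omega, by omega, by omega, hh⟩)⟩)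
      · by_cases hi2 : i < G₁.n
        · exact Or.inr (Or.inr ⟨by omega, by omega, by omega⟩)
        · exact Or.inr (Or.inl ⟨by omega, by omega, by omega, by omega,
            Or.inr (Or.inr ⟨by omega, by omega, by omega⟩)⟩)
  · intro i hi
    rw [hn] at hi
    simp only [id_eq]
    by_cases h1 : i < G₁.n
    · rw [join_label_lo (G₁.join G₂) G₃ (by rw [join_n]; omega),
        join_label_lo G₁ G₂ h1, join_label_lo G₁ (G₂.join G₃) h1]
    · by_cases h2 : i < G₁.n + G₂.n
      · rw [join_label_lo (G₁.join G₂) G₃ (by rw [join_n]; omega),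
          join_label_hi G₁ G₂ (by omega), join_label_hi G₁ (G₂.join G₃) (by omega),
          join_label_lo G₂ G₃ (by omega)]
      · rw [join_label_hi (G₁.join G₂) G₃ (by rw [join_n]; omega),
          join_label_hi G₁ (G₂.join G₃) (by omega),
          join_label_hi G₂ G₃ (by omega), join_n, e3]

lemma join_congr {B : Type} {A A' C C' : Graph B} (h₁ : A.Iso A') (h₂ : C.Iso C') :
    (A.join C).Iso (A'.join C') := by
  obtain ⟨hn1, g₁, lt1, inj1, sur1, ed1, lb1⟩ := iso_elim h₁
  obtain ⟨hn2, g₂, lt2, inj2, sur2, ed2, lb2⟩ := iso_elim h₂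
  have hn : (A.join C).n = (A'.join C').n := by rw [join_n, join_n, hn1, hn2]
  have hjn : (A.join C).n = A.n + C.n := join_n _ _
  refine iso_mk hn (fun i => if i < A.n then g₁ i else g₂ (i - A.n) + A.n) ?_ ?_ ?_ ?_
  · intro i hi; rw [hjn] at hi ⊢; beta_reduce
    split
    · have := lt1 i (by omega); omega
    · have := lt2 (i - A.n) (by omega); omega
  · intro i j hi hj hij; rw [hjn] at hi hj
    beta_reduce at hij
    split at hij <;> split at hij
    · exact inj1 _ _ (by omega) (by omega) hij
    · have := lt1 i (by omega); omega
    · have := lt1 j (by omega); omega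
    · have h := inj2 (i - A.n) (j - A.n) (by omega) (by omega) (by omega); omega
  · intro i j hi hj; rw [hjn] at hi hj
    beta_reduce
    rw [join_edge_iff, join_edge_iff, ← hn1, ← hn2]
    by_cases h1 : i < A.n <;> by_cases h2 : j < A.n
    · rw [if_pos h1, if_pos h2]
      have b1 := lt1 i (by omega); have b2 := lt1 j (by omega)
      constructor
      · rintro (⟨_, _, hh⟩ | ⟨a1, _, _, _, _⟩ | ⟨_, a2, _⟩)
        · exact Or.inl ⟨by omega, by omega, (ed1 _ _ (by omega) (by omega)).mp hh⟩
        · omega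
        · omega
      · rintro (⟨_, _, hh⟩ | ⟨a1, _, _, _, _⟩ | ⟨_, a2, _⟩)
        · exact Or.inl ⟨by omega, by omega, (ed1 _ _ (by omega) (by omega)).mpr hh⟩
        · omega
        · omega
    · rw [if_pos h1, if_neg h2]
      have b1 := lt1 i (by omega); have b2 := lt2 (j - A.n) (by omega)
      constructor
      · intro _; exact Or.inr (Or.inr ⟨by omega, by omega, by omega⟩)
      · intro _; exact Or.inr (Or.inr ⟨by omega, by omega, by omega⟩)
    · rw [if_neg h1, if_pos h2]
      have b1 := lt2 (i - A.n) (by omega); have b2 := lt1 j (by omega)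
      constructor
      · rintro (⟨a1, _, _⟩ | ⟨_, _, a2, _, _⟩ | ⟨a1, _, _⟩) <;> omega
      · rintro (⟨a1, _, _⟩ | ⟨_, _, a2, _, _⟩ | ⟨a1, _, _⟩) <;> omega
    · rw [if_neg h1, if_neg h2]
      have b1 := lt2 (i - A.n) (by omega); have b2 := lt2 (j - A.n) (by omega)
      have c1 : g₂ (i - A.n) + A.n - A.n = g₂ (i - A.n) := by omega
      have c2 : g₂ (j - A.n) + A.n - A.n = g₂ (j - A.n) := by omega
      rw [c1, c2]
      constructor
      · rintro (⟨a1, _, _⟩ | ⟨_, _, _, _, hh⟩ | ⟨a1, _, _⟩)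
        · omega
        · exact Or.inr (Or.inl ⟨by omega, by omega, by omega, by omega,
            (ed2 _ _ (by omega) (by omega)).mp hh⟩)
        · omega
      · rintro (⟨a1, _, _⟩ | ⟨_, _, _, _, hh⟩ | ⟨a1, _, _⟩)
        · omega
        · exact Or.inr (Or.inl ⟨by omega, by omega, by omega, by omega,
            (ed2 _ _ (by omega) (by omega)).mpr hh⟩)
        · omega
  · intro i hi; rw [hjn] at hi
    beta_reduce
    by_cases h1 : i < A.n
    · rw [if_pos h1]
      have := lt1 i (by omega)
      rw [join_label_lo A C (by omega), join_label_lo A' C' (by omega), lb1 i (by omega)]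
    · rw [if_neg h1]
      have := lt2 (i - A.n) (by omega)
      rw [join_label_hi A C (by omega), join_label_hi A' C' (by omega), ← hn1,
        Nat.add_sub_cancel, lb2 (i - A.n) (by omega)]

lemma union_congr {B : Type} {A A' C C' : Graph B} (h₁ : A.Iso A') (h₂ : C.Iso C') :
    (A.union C).Iso (A'.union C') := by
  obtain ⟨hn1, g₁, lt1, inj1, sur1, ed1, lb1⟩ := iso_elim h₁
  obtain ⟨hn2, g₂, lt2, inj2, sur2, ed2, lb2⟩ := iso_elim h₂
  have hn : (A.union C).n = (A'.union C').n := by rw [union_n, union_n, hn1, hn2]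
  have hjn : (A.union C).n = A.n + C.n := union_n _ _
  refine iso_mk hn (fun i => if i < A.n then g₁ i else g₂ (i - A.n) + A.n) ?_ ?_ ?_ ?_
  · intro i hi; rw [hjn] at hi ⊢; beta_reduce
    split
    · have := lt1 i (by omega); omega
    · have := lt2 (i - A.n) (by omega); omega
  · intro i j hi hj hij; rw [hjn] at hi hj
    beta_reduce at hij
    split at hij <;> split at hij
    · exact inj1 _ _ (by omega) (by omega) hij
    · have := lt1 i (by omega); omega
    · have := lt1 j (by omega); omega
    · have h := inj2 (i - A.n) (j - A.n) (by omega) (by omega) (by omega); omega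
  · intro i j hi hj; rw [hjn] at hi hj
    beta_reduce
    rw [union_edge_iff, union_edge_iff, ← hn1, ← hn2]
    by_cases h1 : i < A.n <;> by_cases h2 : j < A.n
    · rw [if_pos h1, if_pos h2]
      have b1 := lt1 i (by omega); have b2 := lt1 j (by omega)
      constructor
      · rintro (⟨_, _, hh⟩ | ⟨a1, _, _, _, _⟩)
        · exact Or.inl ⟨by omega, by omega, (ed1 _ _ (by omega) (by omega)).mp hh⟩
        · omega
      · rintro (⟨_, _, hh⟩ | ⟨a1, _, _, _, _⟩)
        · exact Or.inl ⟨by omega, by omega, (ed1 _ _ (by omega) (by omega)).mpr hh⟩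
        · omega
    · rw [if_pos h1, if_neg h2]
      have b1 := lt1 i (by omega); have b2 := lt2 (j - A.n) (by omega)
      constructor
      · rintro (⟨_, a1, _⟩ | ⟨a1, _, _, _, _⟩) <;> omega
      · rintro (⟨_, a1, _⟩ | ⟨a1, _, _, _, _⟩) <;> omega
    · rw [if_neg h1, if_pos h2]
      have b1 := lt2 (i - A.n) (by omega); have b2 := lt1 j (by omega)
      constructor
      · rintro (⟨a1, _, _⟩ | ⟨_, _, a2, _, _⟩) <;> omega
      · rintro (⟨a1, _, _⟩ | ⟨_, _, a2, _, _⟩) <;> omega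
    · rw [if_neg h1, if_neg h2]
      have b1 := lt2 (i - A.n) (by omega); have b2 := lt2 (j - A.n) (by omega)
      have c1 : g₂ (i - A.n) + A.n - A.n = g₂ (i - A.n) := by omega
      have c2 : g₂ (j - A.n) + A.n - A.n = g₂ (j - A.n) := by omega
      rw [c1, c2]
      constructor
      · rintro (⟨a1, _, _⟩ | ⟨_, _, _, _, hh⟩)
        · omega
        · exact Or.inr ⟨by omega, by omega, by omega, by omega,
            (ed2 _ _ (by omega) (by omega)).mp hh⟩
      · rintro (⟨a1, _, _⟩ | ⟨_, _, _, _, hh⟩)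
        · omega
        · exact Or.inr ⟨by omega, by omega, by omega, by omega,
            (ed2 _ _ (by omega) (by omega)).mpr hh⟩
  · intro i hi; rw [hjn] at hi
    beta_reduce
    by_cases h1 : i < A.n
    · rw [if_pos h1]
      have := lt1 i (by omega)
      rw [union_label_lo A C (by omega), union_label_lo A' C' (by omega), lb1 i (by omega)]
    · rw [if_neg h1]
      have := lt2 (i - A.n) (by omega)
      rw [union_label_hi A C (by omega), union_label_hi A' C' (by omega), ← hn1,
        Nat.add_sub_cancel, lb2 (i - A.n) (by omega)]

/-! ### Restriction of a graph to a finite index set -/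

def fsort (s : Finset ℕ) : List ℕ := s.sort (· ≤ ·)

lemma fsort_length (s : Finset ℕ) : (fsort s).length = s.card :=
  Finset.length_sort _

lemma fsort_sorted (s : Finset ℕ) : (fsort s).Pairwise (· < ·) :=
  List.sortedLT_iff_pairwise.mp (Finset.sortedLT_sort s)

lemma mem_fsort {s : Finset ℕ} {x : ℕ} : x ∈ fsort s ↔ x ∈ s :=
  Finset.mem_sort _

def enum (s : Finset ℕ) (i : ℕ) : ℕ := (fsort s).getD i 0

lemma enum_eq_getElem (s : Finset ℕ) {i : ℕ} (h : i < s.card) :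
    enum s i = (fsort s)[i]'(by rw [fsort_length]; exact h) :=
  List.getD_eq_getElem _ _ _

lemma enum_mem {s : Finset ℕ} {i : ℕ} (h : i < s.card) : enum s i ∈ s := by
  rw [enum_eq_getElem s h]
  exact mem_fsort.mp (List.getElem_mem _)

lemma enum_lt_enum {s : Finset ℕ} {i j : ℕ} (hij : i < j) (hj : j < s.card) :
    enum s i < enum s j := by
  rw [enum_eq_getElem s (hij.trans hj), enum_eq_getElem s hj]
  have h1 : i < (fsort s).length := by rw [fsort_length]; exact hij.trans hj
  have h2 : j < (fsort s).length := by rw [fsort_length]; exact hj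
  exact List.pairwise_iff_getElem.mp (fsort_sorted s) i j h1 h2 hij

lemma enum_inj {s : Finset ℕ} {i j : ℕ} (hi : i < s.card) (hj : j < s.card)
    (h : enum s i = enum s j) : i = j := by
  rcases Nat.lt_trichotomy i j with hl | he | hg
  · have := enum_lt_enum hl hj; omega
  · exact he
  · have := enum_lt_enum hg hi; omega

lemma enum_indexOf {s : Finset ℕ} {x : ℕ} (h : x ∈ s) :
    List.idxOf x (fsort s) < s.card ∧ enum s (List.idxOf x (fsort s)) = x := by
  have hx : x ∈ fsort s := mem_fsort.mpr h
  have hlt : List.idxOf x (fsort s) < (fsort s).length := List.idxOf_lt_length_iff.mpr hx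
  constructor
  · rwa [fsort_length] at hlt
  · rw [enum_eq_getElem s (by rwa [fsort_length] at hlt)]
    exact List.getElem_idxOf hlt

lemma enum_surj {s : Finset ℕ} {x : ℕ} (h : x ∈ s) :
    ∃ i, i < s.card ∧ enum s i = x :=
  ⟨_, (enum_indexOf h).1, (enum_indexOf h).2⟩

lemma fsort_unique {s : Finset ℕ} {l : List ℕ} (hs : l.Pairwise (· < ·))
    (hm : ∀ x, x ∈ l ↔ x ∈ s) : fsort s = l := by
  refine List.Perm.eq_of_pairwise' (Finset.pairwise_sort _ _) (hs.imp le_of_lt) ?_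
  refine (List.perm_ext_iff_of_nodup (Finset.sort_nodup _ _) hs.nodup).mpr ?_
  intro a
  rw [Finset.mem_sort]
  exact (hm a).symm

def restrict (G : Graph B) (s : Finset ℕ) : Graph B where
  n := s.card
  label := fun i => G.label (enum s i)
  edge := fun i j => i < s.card ∧ j < s.card ∧ G.edge (enum s i) (enum s j)
  edge_lt := fun i j h => ⟨h.1, h.2.1⟩

lemma restrict_n (G : Graph B) (s : Finset ℕ) : (G.restrict s).n = s.card := rfl

lemma restrict_edge_iff (G : Graph B) (s : Finset ℕ) (i j : ℕ) :
    (G.restrict s).edge i j ↔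
      i < s.card ∧ j < s.card ∧ G.edge (enum s i) (enum s j) := Iff.rfl

lemma restrict_label (G : Graph B) (s : Finset ℕ) (i : ℕ) :
    (G.restrict s).label i = G.label (enum s i) := rfl

lemma enum_range {n i : ℕ} (hi : i < n) : enum (Finset.range n) i = i := by
  have hlen : i < (fsort (Finset.range n)).length := by
    rw [fsort_length, Finset.card_range]; exact hi
  rw [enum, List.getD_eq_getElem _ _ hlen]
  have : fsort (Finset.range n) = List.range n := Finset.sort_range n
  simp only [this]
  simp [List.getElem_range]

lemma restrict_range_iso (G : Graph B) : (G.restrict (Finset.range G.n)).Iso G := by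
  have hn : (G.restrict (Finset.range G.n)).n = G.n := by
    rw [restrict_n, Finset.card_range]
  refine iso_mk hn id (fun i hi => by simpa only [id_eq] using hi)
    (fun i j _ _ hh => by simpa only [id_eq] using hh) ?_ ?_
  · intro i j hi hj
    rw [hn] at hi hj
    simp only [id_eq, restrict_edge_iff, Finset.card_range, enum_range hi, enum_range hj]
    constructor
    · rintro ⟨_, _, hh⟩; exact hh
    · intro hh; exact ⟨hi, hj, hh⟩
  · intro i hi
    rw [hn] at hi
    simp only [id_eq, restrict_label, enum_range hi]

lemma restrict_map_iso (G₁ G₂ : Graph B) (T : Finset ℕ) (φ : ℕ → ℕ)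
    (hinj : ∀ u ∈ T, ∀ v ∈ T, φ u = φ v → u = v)
    (he : ∀ u ∈ T, ∀ v ∈ T, (G₁.edge (φ u) (φ v) ↔ G₂.edge u v))
    (hl : ∀ u ∈ T, G₁.label (φ u) = G₂.label u) :
    (G₁.restrict (T.image φ)).Iso (G₂.restrict T) := by
  have hcard : (T.image φ).card = T.card :=
    Finset.card_image_of_injOn (fun u hu v hv h =>
      hinj u (Finset.mem_coe.mp hu) v (Finset.mem_coe.mp hv) h)
  have hn : (G₁.restrict (T.image φ)).n = (G₂.restrict T).n := by
    rw [restrict_n, restrict_n, hcard]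
  set S := T.image φ with hS
  have key : ∀ i, i < T.card →
      List.idxOf (φ (enum T i)) (fsort S) < S.card ∧
        enum S (List.idxOf (φ (enum T i)) (fsort S)) = φ (enum T i) := by
    intro i hi
    exact enum_indexOf (Finset.mem_image_of_mem φ (enum_mem hi))
  refine iso_mk hn (fun i => List.idxOf (φ (enum T i)) (fsort S)) ?_ ?_ ?_ ?_
  · intro i hi
    rw [restrict_n, hcard] at hi
    rw [restrict_n]
    exact (key i hi).1
  · intro i j hi hj hij
    rw [restrict_n, hcard] at hi hj
    beta_reduce at hij
    have e1 := (key i hi).2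
    have e2 := (key j hj).2
    rw [hij] at e1
    rw [e2] at e1
    exact (enum_inj hj hi (hinj _ (enum_mem hj) _ (enum_mem hi) e1)).symm
  · intro i j hi hj
    rw [restrict_n, hcard] at hi hj
    beta_reduce
    rw [restrict_edge_iff, restrict_edge_iff, (key i hi).2, (key j hj).2]
    rw [he _ (enum_mem hi) _ (enum_mem hj)]
    constructor
    · rintro ⟨_, _, hh⟩; exact ⟨hi, hj, hh⟩
    · rintro ⟨_, _, hh⟩; exact ⟨(key i hi).1, (key j hj).1, hh⟩
  · intro i hi
    rw [restrict_n, hcard] at hi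
    beta_reduce
    rw [restrict_label, restrict_label, (key i hi).2, hl _ (enum_mem hi)]

lemma fsort_union_shift (sa sb : Finset ℕ) (n₁ : ℕ) (ha : ∀ x ∈ sa, x < n₁) :
    fsort (sa ∪ sb.image (· + n₁)) = fsort sa ++ (fsort sb).map (· + n₁) := by
  refine fsort_unique ?_ ?_
  · refine List.pairwise_append.mpr ⟨fsort_sorted sa, ?_, ?_⟩
    · exact (List.pairwise_map).mpr ((fsort_sorted sb).imp (fun h => by omega))
    · intro a hxa b hxb
      rw [List.mem_map] at hxb
      obtain ⟨b', hb', rfl⟩ := hxb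
      have := ha a (mem_fsort.mp hxa)
      omega
  · intro x
    rw [List.mem_append, List.mem_map, Finset.mem_union, Finset.mem_image]
    constructor
    · rintro (h | ⟨b', hb', rfl⟩)
      · exact Or.inl (mem_fsort.mp h)
      · exact Or.inr ⟨b', mem_fsort.mp hb', rfl⟩
    · rintro (h | ⟨b', hb', rfl⟩)
      · exact Or.inl (mem_fsort.mpr h)
      · exact Or.inr ⟨b', mem_fsort.mpr hb', rfl⟩

lemma card_union_shift (sa sb : Finset ℕ) (n₁ : ℕ) (ha : ∀ x ∈ sa, x < n₁) :
    (sa ∪ sb.image (· + n₁)).card = sa.card + sb.card := by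
  rw [← fsort_length, fsort_union_shift sa sb n₁ ha, List.length_append,
    List.length_map, fsort_length, fsort_length]

lemma enum_union_shift_lo (sa sb : Finset ℕ) (n₁ : ℕ) (ha : ∀ x ∈ sa, x < n₁)
    {i : ℕ} (hi : i < sa.card) :
    enum (sa ∪ sb.image (· + n₁)) i = enum sa i := by
  have h1 : i < (fsort sa).length := by rw [fsort_length]; exact hi
  rw [enum, enum, fsort_union_shift sa sb n₁ ha,
    List.getD_eq_getElem _ _ (by rw [List.length_append]; omega),
    List.getD_eq_getElem _ _ h1, List.getElem_append_left]

lemma enum_union_shift_hi (sa sb : Finset ℕ) (n₁ : ℕ) (ha : ∀ x ∈ sa, x < n₁)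
    {i : ℕ} (hi : sa.card ≤ i) (hi2 : i < sa.card + sb.card) :
    enum (sa ∪ sb.image (· + n₁)) i = enum sb (i - sa.card) + n₁ := by
  have h1 : i - sa.card < (fsort sb).length := by rw [fsort_length]; omega
  have h2 : i < ((fsort sa) ++ (fsort sb).map (· + n₁)).length := by
    rw [List.length_append, List.length_map, fsort_length, fsort_length]; omega
  have h3 : (fsort sa).length ≤ i := by rw [fsort_length]; omega
  rw [enum, enum, fsort_union_shift sa sb n₁ ha,
    List.getD_eq_getElem _ _ h2, List.getD_eq_getElem _ _ h1,
    List.getElem_append_right h3]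
  rw [List.getElem_map]
  congr 2
  rw [fsort_length]

lemma restrict_union_iso (G₁ G₂ : Graph B) (sa sb : Finset ℕ)
    (ha : ∀ x ∈ sa, x < G₁.n) :
    ((G₁.union G₂).restrict (sa ∪ sb.image (· + G₁.n))).Iso
      ((G₁.restrict sa).union (G₂.restrict sb)) := by
  have hc := card_union_shift sa sb G₁.n ha
  have hn : ((G₁.union G₂).restrict (sa ∪ sb.image (· + G₁.n))).n =
      ((G₁.restrict sa).union (G₂.restrict sb)).n := by
    rw [restrict_n, union_n, restrict_n, restrict_n, hc]
  refine iso_mk hn id (fun i hi => by simpa only [id_eq] using hi)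
    (fun i j _ _ hh => by simpa only [id_eq] using hh) ?_ ?_
  · intro i j hi hj
    rw [restrict_n, hc] at hi hj
    simp only [id_eq]
    rw [restrict_edge_iff, union_edge_iff G₁ G₂,
      union_edge_iff (G₁.restrict sa) (G₂.restrict sb), restrict_n, restrict_n, hc]
    by_cases h1 : i < sa.card <;> by_cases h2 : j < sa.card
    · rw [enum_union_shift_lo sa sb G₁.n ha h1, enum_union_shift_lo sa sb G₁.n ha h2]
      have b1 := ha _ (enum_mem h1)
      have b2 := ha _ (enum_mem h2)
      constructor
      · rintro ⟨_, _, (⟨_, _, hh⟩ | ⟨a1, _, _, _, _⟩)⟩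
        · exact Or.inl ⟨h1, h2, h1, h2, hh⟩
        · omega
      · rintro (⟨_, _, _, _, hh⟩ | ⟨a1, _, _, _, _⟩)
        · exact ⟨by omega, by omega, Or.inl ⟨b1, b2, hh⟩⟩
        · omega
    · rw [enum_union_shift_lo sa sb G₁.n ha h1,
        enum_union_shift_hi sa sb G₁.n ha (by omega) (by omega)]
      have b1 := ha _ (enum_mem h1)
      constructor
      · rintro ⟨_, _, (⟨_, a2, _⟩ | ⟨a1, _, _, _, _⟩)⟩ <;> omega
      · rintro (⟨_, a2, _, _, _⟩ | ⟨a1, _, _, _, _⟩) <;> omega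
    · rw [enum_union_shift_lo sa sb G₁.n ha h2,
        enum_union_shift_hi sa sb G₁.n ha (by omega) (by omega)]
      have b2 := ha _ (enum_mem h2)
      constructor
      · rintro ⟨_, _, (⟨a1, _, _⟩ | ⟨_, _, a2, _, _⟩)⟩ <;> omega
      · rintro (⟨a1, _, _, _, _⟩ | ⟨_, _, a2, _, _⟩) <;> omega
    · rw [enum_union_shift_hi sa sb G₁.n ha (by omega) (by omega),
        enum_union_shift_hi sa sb G₁.n ha (by omega) (by omega)]
      have c1 : enum sb (i - sa.card) + G₁.n - G₁.n = enum sb (i - sa.card) := by omega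
      have c2 : enum sb (j - sa.card) + G₁.n - G₁.n = enum sb (j - sa.card) := by omega
      rw [c1, c2]
      constructor
      · rintro ⟨_, _, (⟨a1, _, _⟩ | ⟨_, _, _, _, hh⟩)⟩
        · omega
        · exact Or.inr ⟨by omega, by omega, by omega, by omega, ⟨by omega, by omega, hh⟩⟩
      · rintro (⟨a1, _, _, _, _⟩ | ⟨_, _, _, _, _, _, hh⟩)
        · omega
        · have hb2 := G₂.edge_lt _ _ hh
          exact ⟨by omega, by omega, Or.inr ⟨by omega, by omega, by omega, by omega, hh⟩⟩
  · intro i hi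
    rw [restrict_n, hc] at hi
    simp only [id_eq]
    rw [restrict_label]
    by_cases h1 : i < sa.card
    · rw [enum_union_shift_lo sa sb G₁.n ha h1,
        union_label_lo _ _ (ha _ (enum_mem h1)),
        union_label_lo _ _ (by rw [restrict_n]; exact h1), restrict_label]
    · rw [enum_union_shift_hi sa sb G₁.n ha (by omega) (by omega),
        union_label_hi _ _ (by omega),
        union_label_hi _ _ (by rw [restrict_n]; omega), restrict_label,
        restrict_n, Nat.add_sub_cancel]

lemma restrict_join_iso (G₁ G₂ : Graph B) (sa sb : Finset ℕ)
    (ha : ∀ x ∈ sa, x < G₁.n) (hb : ∀ x ∈ sb, x < G₂.n) :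
    ((G₁.join G₂).restrict (sa ∪ sb.image (· + G₁.n))).Iso
      ((G₁.restrict sa).join (G₂.restrict sb)) := by
  have hc := card_union_shift sa sb G₁.n ha
  have hn : ((G₁.join G₂).restrict (sa ∪ sb.image (· + G₁.n))).n =
      ((G₁.restrict sa).join (G₂.restrict sb)).n := by
    rw [restrict_n, join_n, restrict_n, restrict_n, hc]
  refine iso_mk hn id (fun i hi => by simpa only [id_eq] using hi)
    (fun i j _ _ hh => by simpa only [id_eq] using hh) ?_ ?_
  · intro i j hi hj
    rw [restrict_n, hc] at hi hj
    simp only [id_eq]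
    rw [restrict_edge_iff, join_edge_iff G₁ G₂,
      join_edge_iff (G₁.restrict sa) (G₂.restrict sb), restrict_n, restrict_n, hc]
    by_cases h1 : i < sa.card <;> by_cases h2 : j < sa.card
    · rw [enum_union_shift_lo sa sb G₁.n ha h1, enum_union_shift_lo sa sb G₁.n ha h2]
      have b1 := ha _ (enum_mem h1)
      have b2 := ha _ (enum_mem h2)
      constructor
      · rintro ⟨_, _, (⟨_, _, hh⟩ | ⟨a1, _, _, _, _⟩ | ⟨_, a2, _⟩)⟩
        · exact Or.inl ⟨h1, h2, h1, h2, hh⟩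
        · omega
        · omega
      · rintro (⟨_, _, _, _, hh⟩ | ⟨a1, _, _, _, _⟩ | ⟨_, a2, _⟩)
        · exact ⟨by omega, by omega, Or.inl ⟨b1, b2, hh⟩⟩
        · omega
        · omega
    · rw [enum_union_shift_lo sa sb G₁.n ha h1,
        enum_union_shift_hi sa sb G₁.n ha (by omega) (by omega)]
      have b1 := ha _ (enum_mem h1)
      have b2 := hb _ (enum_mem (show j - sa.card < sb.card by omega))
      constructor
      · intro _
        exact Or.inr (Or.inr ⟨by omega, by omega, by omega⟩)
      · intro _
        exact ⟨by omega, by omega, Or.inr (Or.inr ⟨by omega, by omega, by omega⟩)⟩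
    · rw [enum_union_shift_lo sa sb G₁.n ha h2,
        enum_union_shift_hi sa sb G₁.n ha (by omega) (by omega)]
      have b2 := ha _ (enum_mem h2)
      constructor
      · rintro ⟨_, _, (⟨a1, _, _⟩ | ⟨_, _, a2, _, _⟩ | ⟨a1, _, _⟩)⟩ <;> omega
      · rintro (⟨a1, _, _, _, _⟩ | ⟨_, _, a2, _, _⟩ | ⟨a1, _, _⟩) <;> omega
    · rw [enum_union_shift_hi sa sb G₁.n ha (by omega) (by omega),
        enum_union_shift_hi sa sb G₁.n ha (by omega) (by omega)]
      have c1 : enum sb (i - sa.card) + G₁.n - G₁.n = enum sb (i - sa.card) := by omega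
      have c2 : enum sb (j - sa.card) + G₁.n - G₁.n = enum sb (j - sa.card) := by omega
      rw [c1, c2]
      constructor
      · rintro ⟨_, _, (⟨a1, _, _⟩ | ⟨_, _, _, _, hh⟩ | ⟨a1, _, _⟩)⟩
        · omega
        · exact Or.inr (Or.inl ⟨by omega, by omega, by omega, by omega,
            ⟨by omega, by omega, hh⟩⟩)
        · omega
      · rintro (⟨a1, _, _, _, _⟩ | ⟨_, _, _, _, _, _, hh⟩ | ⟨a1, _, _⟩)
        · omega
        · have hb2 := G₂.edge_lt _ _ hh
          exact ⟨by omega, by omega, Or.inr (Or.inl ⟨by omega, by omega, by omega,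
            by omega, hh⟩)⟩
        · omega
  · intro i hi
    rw [restrict_n, hc] at hi
    simp only [id_eq]
    rw [restrict_label]
    by_cases h1 : i < sa.card
    · rw [enum_union_shift_lo sa sb G₁.n ha h1,
        join_label_lo _ _ (ha _ (enum_mem h1)),
        join_label_lo _ _ (by rw [restrict_n]; exact h1), restrict_label]
    · rw [enum_union_shift_hi sa sb G₁.n ha (by omega) (by omega),
        join_label_hi _ _ (by omega),
        join_label_hi _ _ (by rw [restrict_n]; omega), restrict_label,
        restrict_n, Nat.add_sub_cancel]

end Graph

section Ctx
variable {B : Type} [Inhabited B] (unr : B → Bool)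

open Graph

/-- no unrestricted bindings occur -/
def PureCtx : GCtx B → Prop
  | .empty => True
  | .bind b => unr b = false
  | .comma Γ₁ Γ₂ => PureCtx Γ₁ ∧ PureCtx Γ₂
  | .par Γ₁ Γ₂ => PureCtx Γ₁ ∧ PureCtx Γ₂

/-- no empty leaves occur (hence nonempty) -/
def EmptyFree : GCtx B → Prop
  | .empty => False
  | .bind _ => True
  | .comma Γ₁ Γ₂ => EmptyFree Γ₁ ∧ EmptyFree Γ₂
  | .par Γ₁ Γ₂ => EmptyFree Γ₁ ∧ EmptyFree Γ₂

lemma interp_topOrdered : ∀ Γ : GCtx B, (Γ.interpG unr).TopOrdered := by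
  intro Γ
  induction Γ with
  | empty => intro i j h; exact h.elim
  | bind b =>
    intro i j h
    simp only [GCtx.interpG] at h
    split at h
    · exact h.elim
    · exact h.elim
  | comma Γ₁ Γ₂ ih₁ ih₂ =>
    intro i j h
    rw [show (GCtx.comma Γ₁ Γ₂).interpG unr = (Γ₁.interpG unr).join (Γ₂.interpG unr) from rfl,
      join_edge_iff] at h
    rcases h with ⟨_, _, h⟩ | ⟨_, _, _, _, h⟩ | ⟨_, _, _⟩
    · exact ih₁ _ _ h
    · have := ih₂ _ _ h; omega
    · omega
  | par Γ₁ Γ₂ ih₁ ih₂ =>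
    intro i j h
    rw [show (GCtx.par Γ₁ Γ₂).interpG unr = (Γ₁.interpG unr).union (Γ₂.interpG unr) from rfl,
      union_edge_iff] at h
    rcases h with ⟨_, _, h⟩ | ⟨_, _, _, _, h⟩
    · exact ih₁ _ _ h
    · have := ih₂ _ _ h; omega

lemma interp_n_pos : ∀ Γ : GCtx B, PureCtx unr Γ → EmptyFree Γ →
    0 < (Γ.interpG unr).n := by
  intro Γ
  induction Γ with
  | empty => intro _ h; exact h.elim
  | bind b =>
    intro hp _
    have hp' : unr b = false := hp
    simp only [GCtx.interpG]
    rw [if_neg (by simp [hp'])]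
    exact Nat.one_pos
  | comma Γ₁ Γ₂ ih₁ ih₂ =>
    intro hp he
    have := ih₁ hp.1 he.1
    rw [show (GCtx.comma Γ₁ Γ₂).interpG unr = (Γ₁.interpG unr).join (Γ₂.interpG unr) from rfl,
      join_n]
    omega
  | par Γ₁ Γ₂ ih₁ ih₂ =>
    intro hp he
    have := ih₁ hp.1 he.1
    rw [show (GCtx.par Γ₁ Γ₂).interpG unr = (Γ₁.interpG unr).union (Γ₂.interpG unr) from rfl,
      union_n]
    omega

lemma unrSet_fill : ∀ (P : GPat B) (Γ : GCtx B),
    GCtx.unrSet unr (P.fill Γ) = GCtx.unrSet unr (P.fill GCtx.empty) ∪ GCtx.unrSet unr Γ := by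
  intro P
  induction P with
  | hole =>
    intro Γ
    simp [GPat.fill, GCtx.unrSet]
  | commaL P Δ ih =>
    intro Γ
    simp only [GPat.fill, GCtx.unrSet, ih Γ]
    ext x; simp; tauto
  | commaR Δ P ih =>
    intro Γ
    simp only [GPat.fill, GCtx.unrSet, ih Γ]
    ext x; simp; tauto
  | parL P Δ ih =>
    intro Γ
    simp only [GPat.fill, GCtx.unrSet, ih Γ]
    ext x; simp; tauto
  | parR Δ P ih =>
    intro Γ
    simp only [GPat.fill, GCtx.unrSet, ih Γ]
    ext x; simp; tauto

lemma interp_fill_eq : ∀ (P : GPat B) (Γ₁ Γ₂ : GCtx B),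
    Γ₁.interpG unr = Γ₂.interpG unr →
    (P.fill Γ₁).interpG unr = (P.fill Γ₂).interpG unr := by
  intro P
  induction P with
  | hole => intro Γ₁ Γ₂ h; exact h
  | commaL P Δ ih => intro Γ₁ Γ₂ h; simp only [GPat.fill, GCtx.interpG, ih _ _ h]
  | commaR Δ P ih => intro Γ₁ Γ₂ h; simp only [GPat.fill, GCtx.interpG, ih _ _ h]
  | parL P Δ ih => intro Γ₁ Γ₂ h; simp only [GPat.fill, GCtx.interpG, ih _ _ h]
  | parR Δ P ih => intro Γ₁ Γ₂ h; simp only [GPat.fill, GCtx.interpG, ih _ _ h]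

lemma interp_fill_iso : ∀ (P : GPat B) (Γ₁ Γ₂ : GCtx B),
    ((Γ₁.interpG unr).Iso (Γ₂.interpG unr)) →
    ((P.fill Γ₁).interpG unr).Iso ((P.fill Γ₂).interpG unr) := by
  intro P
  induction P with
  | hole => intro Γ₁ Γ₂ h; exact h
  | commaL P Δ ih => intro Γ₁ Γ₂ h; exact join_congr (ih _ _ h) (iso_refl _)
  | commaR Δ P ih => intro Γ₁ Γ₂ h; exact join_congr (iso_refl _) (ih _ _ h)
  | parL P Δ ih => intro Γ₁ Γ₂ h; exact union_congr (ih _ _ h) (iso_refl _)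
  | parR Δ P ih => intro Γ₁ Γ₂ h; exact union_congr (iso_refl _) (ih _ _ h)

lemma interp_bind_unr {b : B} (hb : unr b = true) :
    (GCtx.bind b).interpG unr = GCtx.empty.interpG unr := by
  simp [GCtx.interpG, hb]

theorem equiv_sound {Γ₁ Γ₂ : GCtx B} (h : CtxEquiv unr Γ₁ Γ₂) :
    ((Γ₁.interpG unr).Iso (Γ₂.interpG unr)) ∧
      GCtx.unrSet unr Γ₁ = GCtx.unrSet unr Γ₂ := by
  induction h with
  | commaIdL Γ =>
    exact ⟨nzero_join rfl, by simp [GCtx.unrSet]⟩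
  | commaIdR Γ =>
    exact ⟨join_nzero rfl, by simp [GCtx.unrSet]⟩
  | commaAssoc Γ₁ Γ₂ Γ₃ =>
    refine ⟨join_assoc_iso _ _ _, ?_⟩
    simp [GCtx.unrSet, Set.union_assoc]
  | parId Γ =>
    exact ⟨nzero_union rfl, by simp [GCtx.unrSet]⟩
  | parComm Γ₁ Γ₂ =>
    exact ⟨union_comm_iso _ _, by simp [GCtx.unrSet, Set.union_comm]⟩
  | parAssoc Γ₁ Γ₂ Γ₃ =>
    refine ⟨union_assoc_iso _ _ _, ?_⟩
    simp [GCtx.unrSet, Set.union_assoc]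
  | unrMove P b hb =>
    constructor
    · have h1 := interp_fill_eq unr P _ _ (interp_bind_unr unr hb)
      rw [show (GCtx.par (P.fill GCtx.empty) (GCtx.bind b)).interpG unr =
        ((P.fill GCtx.empty).interpG unr).union ((GCtx.bind b).interpG unr) from rfl]
      rw [h1]
      refine iso_symm (union_nzero ?_)
      rw [interp_bind_unr unr hb]
      rfl
    · rw [unrSet_fill unr P (GCtx.bind b)]
      rfl
  | unrDemote b hb =>
    constructor
    · refine iso_of_n_zero ?_ ?_ <;> simp [GCtx.interpG, hb, union_n, Graph.zero]
    · simp [GCtx.unrSet]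
  | congr P Γ₁ Γ₂ h ih =>
    refine ⟨interp_fill_iso unr P _ _ ih.1, ?_⟩
    rw [unrSet_fill unr P Γ₁, unrSet_fill unr P Γ₂, ih.2]
  | refl Γ => exact ⟨iso_refl _, rfl⟩
  | symm Γ₁ Γ₂ h ih => exact ⟨iso_symm ih.1, ih.2.symm⟩
  | trans Γ₁ Γ₂ Γ₃ h₁ h₂ ih₁ ih₂ => exact ⟨iso_trans ih₁.1 ih₂.1, ih₁.2.trans ih₂.2⟩

end Ctx




section Helpers
variable {B : Type} [Inhabited B] {unr : B → Bool}

open Graph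

lemma ceq_comma_l {A A' C : GCtx B} (h : CtxEquiv unr A A') :
    CtxEquiv unr (GCtx.comma A C) (GCtx.comma A' C) :=
  CtxEquiv.congr (GPat.commaL GPat.hole C) A A' h

lemma ceq_comma_r {A C C' : GCtx B} (h : CtxEquiv unr C C') :
    CtxEquiv unr (GCtx.comma A C) (GCtx.comma A C') :=
  CtxEquiv.congr (GPat.commaR A GPat.hole) C C' h

lemma ceq_par_l {A A' C : GCtx B} (h : CtxEquiv unr A A') :
    CtxEquiv unr (GCtx.par A C) (GCtx.par A' C) :=
  CtxEquiv.congr (GPat.parL GPat.hole C) A A' h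

lemma ceq_par_r {A C C' : GCtx B} (h : CtxEquiv unr C C') :
    CtxEquiv unr (GCtx.par A C) (GCtx.par A C') :=
  CtxEquiv.congr (GPat.parR A GPat.hole) C C' h

lemma ceq_comma {A A' C C' : GCtx B} (h₁ : CtxEquiv unr A A') (h₂ : CtxEquiv unr C C') :
    CtxEquiv unr (GCtx.comma A C) (GCtx.comma A' C') :=
  CtxEquiv.trans _ _ _ (ceq_comma_l h₁) (ceq_comma_r h₂)

lemma ceq_par {A A' C C' : GCtx B} (h₁ : CtxEquiv unr A A') (h₂ : CtxEquiv unr C C') :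
    CtxEquiv unr (GCtx.par A C) (GCtx.par A' C') :=
  CtxEquiv.trans _ _ _ (ceq_par_l h₁) (ceq_par_r h₂)

lemma par_medial (W X Y Z : GCtx B) :
    CtxEquiv unr (GCtx.par (GCtx.par W X) (GCtx.par Y Z))
      (GCtx.par (GCtx.par W Y) (GCtx.par X Z)) := by
  refine CtxEquiv.trans _ _ _
    (CtxEquiv.symm _ _ (CtxEquiv.parAssoc W X (GCtx.par Y Z))) ?_
  refine CtxEquiv.trans _ (GCtx.par W (GCtx.par Y (GCtx.par X Z))) _ ?_
    (CtxEquiv.parAssoc W Y (GCtx.par X Z))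
  refine ceq_par_r ?_
  refine CtxEquiv.trans _ (GCtx.par (GCtx.par X Y) Z) _ (CtxEquiv.parAssoc X Y Z) ?_
  refine CtxEquiv.trans _ (GCtx.par (GCtx.par Y X) Z) _ (ceq_par_l (CtxEquiv.parComm X Y)) ?_
  exact CtxEquiv.symm _ _ (CtxEquiv.parAssoc Y X Z)

lemma exists_emptyFree (unr : B → Bool) : ∀ Γ : GCtx B, PureCtx unr Γ →
    ∃ Γ' : GCtx B, PureCtx unr Γ' ∧ CtxEquiv unr Γ Γ' ∧
      (Γ' = GCtx.empty ∨ EmptyFree Γ') := by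
  intro Γ
  induction Γ with
  | empty => exact fun _ => ⟨GCtx.empty, trivial, CtxEquiv.refl _, Or.inl rfl⟩
  | bind b => exact fun hp => ⟨GCtx.bind b, hp, CtxEquiv.refl _, Or.inr trivial⟩
  | comma A C ihA ihC =>
    intro hp
    obtain ⟨A', hpA, hA, hA'⟩ := ihA hp.1
    obtain ⟨C', hpC, hC, hC'⟩ := ihC hp.2
    rcases hA' with rfl | hefA
    · rcases hC' with rfl | hefC
      · exact ⟨GCtx.empty, trivial,
          CtxEquiv.trans _ _ _ (ceq_comma hA hC) (CtxEquiv.commaIdL _), Or.inl rfl⟩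
      · exact ⟨C', hpC,
          CtxEquiv.trans _ _ _ (ceq_comma hA hC) (CtxEquiv.commaIdL _), Or.inr hefC⟩
    · rcases hC' with rfl | hefC
      · exact ⟨A', hpA,
          CtxEquiv.trans _ _ _ (ceq_comma hA hC) (CtxEquiv.commaIdR _), Or.inr hefA⟩
      · exact ⟨GCtx.comma A' C', ⟨hpA, hpC⟩, ceq_comma hA hC, Or.inr ⟨hefA, hefC⟩⟩
  | par A C ihA ihC =>
    intro hp
    obtain ⟨A', hpA, hA, hA'⟩ := ihA hp.1
    obtain ⟨C', hpC, hC, hC'⟩ := ihC hp.2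
    rcases hA' with rfl | hefA
    · rcases hC' with rfl | hefC
      · exact ⟨GCtx.empty, trivial,
          CtxEquiv.trans _ _ _ (ceq_par hA hC) (CtxEquiv.parId _), Or.inl rfl⟩
      · exact ⟨C', hpC,
          CtxEquiv.trans _ _ _ (ceq_par hA hC) (CtxEquiv.parId _), Or.inr hefC⟩
    · rcases hC' with rfl | hefC
      · refine ⟨A', hpA, ?_, Or.inr hefA⟩
        refine CtxEquiv.trans _ _ _ (ceq_par hA hC) ?_
        exact CtxEquiv.trans _ _ _ (CtxEquiv.parComm _ _) (CtxEquiv.parId _)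
      · exact ⟨GCtx.par A' C', ⟨hpA, hpC⟩, ceq_par hA hC, Or.inr ⟨hefA, hefC⟩⟩

lemma join_union_absurd {GA GB GC GD : Graph B}
    (hA : 0 < GA.n) (hB : 0 < GB.n) (hC : 0 < GC.n) (hD : 0 < GD.n)
    (hiso : (GA.join GB).Iso (GC.union GD)) : False := by
  obtain ⟨hn, g, hlt, hinj, hsurj, he, hl⟩ := iso_elim hiso
  rw [join_n] at hlt hinj hsurj he hl hn
  rw [union_n] at hn
  set n := GA.n + GB.n with hnd
  -- no cross edges between C-block images and D-block images
  have hcross : ∀ u v, u < GC.n → GC.n ≤ v → v < n →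
      ¬ (GA.join GB).edge (g u) (g v) ∧ ¬ (GA.join GB).edge (g v) (g u) := by
    intro u v hu hv hv2
    constructor
    · rw [he u v (by omega) (by omega), union_edge_iff]
      rintro (⟨_, a2, _⟩ | ⟨a1, _, _, _, _⟩) <;> omega
    · rw [he v u (by omega) (by omega), union_edge_iff]
      rintro (⟨a1, _, _⟩ | ⟨_, _, a2, _, _⟩) <;> omega
  -- all cross pairs in the join are edges
  have hjoin : ∀ x y, x < GA.n → GA.n ≤ y → y < n → (GA.join GB).edge x y := by
    intro x y hx hy hy2
    rw [join_edge_iff]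
    exact Or.inr (Or.inr ⟨hx, hy, by omega⟩)
  have h0C : (0 : ℕ) < GC.n := hC
  have hCn : GC.n < n := by omega
  by_cases hx : g 0 < GA.n
  · by_cases hy : g GC.n < GA.n
    · -- both in low part; find the preimage of GA.n
      obtain ⟨w, hw, hgw⟩ := hsurj GA.n (by omega)
      by_cases hwC : w < GC.n
      · exact (hcross w GC.n hwC (le_refl _) hCn).2
          (hjoin (g GC.n) (g w) hy (by omega) (by rw [hgw]; omega))
      · exact (hcross 0 w h0C (by omega) (by omega)).1
          (hjoin (g 0) (g w) hx (by omega) (by rw [hgw]; omega))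
    · exact (hcross 0 GC.n h0C (le_refl _) hCn).1
        (hjoin (g 0) (g GC.n) hx (by omega) (hlt _ (by omega)))
  · by_cases hy : g GC.n < GA.n
    · exact (hcross 0 GC.n h0C (le_refl _) hCn).2
        (hjoin (g GC.n) (g 0) hy (by omega) (hlt _ (by omega)))
    · -- both in high part; find preimage of 0
      obtain ⟨w, hw, hgw⟩ := hsurj 0 (by omega)
      by_cases hwC : w < GC.n
      · exact (hcross w GC.n hwC (le_refl _) hCn).1
          (hjoin (g w) (g GC.n) (by omega) (by omega) (hlt _ (by omega)))
      · exact (hcross 0 w h0C (by omega) (by omega)).2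
          (hjoin (g w) (g 0) (by omega) (by omega) (hlt _ (by omega)))
end Helpers

section Partition
variable {B : Type} [Inhabited B]

open Graph

lemma interp_comma (unr : B → Bool) (A C : GCtx B) :
    (GCtx.comma A C).interpG unr = (A.interpG unr).join (C.interpG unr) := rfl

lemma interp_par (unr : B → Bool) (A C : GCtx B) :
    (GCtx.par A C).interpG unr = (A.interpG unr).union (C.interpG unr) := rfl

lemma interp_bind_n {unr : B → Bool} {b : B} (hp : unr b = false) :
    ((GCtx.bind b).interpG unr).n = 1 := by
  simp only [GCtx.interpG]
  rw [if_neg (by simp [hp])]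

lemma interp_bind_label {unr : B → Bool} {b : B} (hp : unr b = false) (i : ℕ) :
    ((GCtx.bind b).interpG unr).label i = b := by
  simp only [GCtx.interpG]
  rw [if_neg (by simp [hp])]

lemma restrict_empty_iso (G : Graph B) :
    ((Graph.zero B).Iso (G.restrict (∅ : Finset ℕ))) :=
  iso_of_n_zero rfl (by rw [restrict_n]; exact Finset.card_empty)

lemma restrict_univ_iso (G : Graph B) (T : Finset ℕ) (hT : ∀ i, i < G.n ↔ i ∈ T) :
    G.Iso (G.restrict T) := by
  have : T = Finset.range G.n := by
    ext x; rw [Finset.mem_range]; exact ((hT x).symm)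
  rw [this]
  exact iso_symm (restrict_range_iso G)

lemma join_partition_trivial (unr : B → Bool) (Γ : GCtx B) (hp : PureCtx unr Γ)
    (S T : Finset ℕ)
    (hcov : ∀ i, i < (Γ.interpG unr).n ↔ (i ∈ S ∨ i ∈ T))
    (hst : S = ∅ ∨ T = ∅) :
    ∃ Γa Γb : GCtx B, PureCtx unr Γa ∧ PureCtx unr Γb ∧
      CtxEquiv unr Γ (GCtx.comma Γa Γb) ∧
      ((Γa.interpG unr).Iso ((Γ.interpG unr).restrict S)) ∧
      ((Γb.interpG unr).Iso ((Γ.interpG unr).restrict T)) := by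
  rcases hst with rfl | rfl
  · refine ⟨GCtx.empty, Γ, trivial, hp, CtxEquiv.symm _ _ (CtxEquiv.commaIdL Γ),
      restrict_empty_iso _, ?_⟩
    refine restrict_univ_iso _ _ ?_
    intro i
    rw [hcov i]
    simp
  · refine ⟨Γ, GCtx.empty, hp, trivial, CtxEquiv.symm _ _ (CtxEquiv.commaIdR Γ),
      ?_, restrict_empty_iso _⟩
    refine restrict_univ_iso _ _ ?_
    intro i
    rw [hcov i]
    simp

lemma par_partition_trivial (unr : B → Bool) (Γ : GCtx B) (hp : PureCtx unr Γ)
    (S T : Finset ℕ)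
    (hcov : ∀ i, i < (Γ.interpG unr).n ↔ (i ∈ S ∨ i ∈ T))
    (hst : S = ∅ ∨ T = ∅) :
    ∃ Γa Γb : GCtx B, PureCtx unr Γa ∧ PureCtx unr Γb ∧
      CtxEquiv unr Γ (GCtx.par Γa Γb) ∧
      ((Γa.interpG unr).Iso ((Γ.interpG unr).restrict S)) ∧
      ((Γb.interpG unr).Iso ((Γ.interpG unr).restrict T)) := by
  rcases hst with rfl | rfl
  · refine ⟨GCtx.empty, Γ, trivial, hp, CtxEquiv.symm _ _ (CtxEquiv.parId Γ),
      restrict_empty_iso _, ?_⟩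
    refine restrict_univ_iso _ _ ?_
    intro i
    rw [hcov i]
    simp
  · refine ⟨Γ, GCtx.empty, hp, trivial, ?_, ?_, restrict_empty_iso _⟩
    · exact CtxEquiv.symm _ _ (CtxEquiv.trans _ _ _ (CtxEquiv.parComm _ _) (CtxEquiv.parId Γ))
    · refine restrict_univ_iso _ _ ?_
      intro i
      rw [hcov i]
      simp

lemma join_partition (unr : B → Bool) : ∀ Γ : GCtx B, PureCtx unr Γ → EmptyFree Γ →
    ∀ S T : Finset ℕ,
    (∀ i, i < (Γ.interpG unr).n ↔ (i ∈ S ∨ i ∈ T)) →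
    (∀ i, ¬(i ∈ S ∧ i ∈ T)) →
    (∀ s ∈ S, ∀ t ∈ T, (Γ.interpG unr).edge s t) →
    ∃ Γa Γb : GCtx B, PureCtx unr Γa ∧ PureCtx unr Γb ∧
      CtxEquiv unr Γ (GCtx.comma Γa Γb) ∧
      ((Γa.interpG unr).Iso ((Γ.interpG unr).restrict S)) ∧
      ((Γb.interpG unr).Iso ((Γ.interpG unr).restrict T)) := by
  intro Γ
  induction Γ with
  | empty => exact fun _ he => he.elim
  | bind b =>
    intro hp he S T hcov hdis hcross
    by_cases hS : S = ∅
    · exact join_partition_trivial unr _ hp S T hcov (Or.inl hS)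
    by_cases hT : T = ∅
    · exact join_partition_trivial unr _ hp S T hcov (Or.inr hT)
    obtain ⟨s, hs⟩ := Finset.nonempty_iff_ne_empty.mpr hS
    obtain ⟨t, ht⟩ := Finset.nonempty_iff_ne_empty.mpr hT
    have hn1 := interp_bind_n (unr := unr) (b := b) hp
    have hsn : s < 1 := by rw [← hn1]; exact (hcov s).mpr (Or.inl hs)
    have htn : t < 1 := by rw [← hn1]; exact (hcov t).mpr (Or.inr ht)
    have : s = t := by omega
    exact absurd ⟨this ▸ hs, ht⟩ (hdis t)
  | comma A C ihA ihC =>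
    intro hp he S T hcov hdis hcross
    by_cases hS : S = ∅
    · exact join_partition_trivial unr _ hp S T hcov (Or.inl hS)
    by_cases hT : T = ∅
    · exact join_partition_trivial unr _ hp S T hcov (Or.inr hT)
    have hGn : ((GCtx.comma A C).interpG unr).n = (A.interpG unr).n + (C.interpG unr).n :=
      join_n _ _
    have htop := interp_topOrdered unr (GCtx.comma A C)
    by_cases hme : ∃ x ∈ S, (A.interpG unr).n ≤ x
    · -- S meets the high block: the low block is contained in S
      obtain ⟨x₀, hx₀S, hx₀a⟩ := hme
      have hThi : ∀ t ∈ T, (A.interpG unr).n ≤ t := by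
        intro t ht
        by_contra hta
        have hedge := hcross x₀ hx₀S t ht
        have := htop _ _ hedge
        omega
      have hlo : ∀ i, i < (A.interpG unr).n → i ∈ S := by
        intro i hi
        rcases (hcov i).mp (by omega) with h | h
        · exact h
        · have := hThi i h; omega
      have mem_Sb : ∀ z, z ∈ (S.filter (fun x => (A.interpG unr).n ≤ x)).image
          (· - (A.interpG unr).n) ↔ (z + (A.interpG unr).n) ∈ S := by
        intro z
        constructor
        · intro hz
          obtain ⟨x, hx, hxz⟩ := Finset.mem_image.mp hz
          obtain ⟨hxS, hxa⟩ := Finset.mem_filter.mp hx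
          have hzz : z + (A.interpG unr).n = x := by omega
          rwa [hzz]
        · intro hz
          exact Finset.mem_image.mpr ⟨z + (A.interpG unr).n,
            Finset.mem_filter.mpr ⟨hz, by simp⟩, by omega⟩
      have mem_Tb : ∀ z, z ∈ T.image (· - (A.interpG unr).n) ↔
          (z + (A.interpG unr).n) ∈ T := by
        intro z
        constructor
        · intro hz
          obtain ⟨x, hx, hxz⟩ := Finset.mem_image.mp hz
          have := hThi x hx
          have hzz : z + (A.interpG unr).n = x := by omega
          rwa [hzz]
        · intro hz
          exact Finset.mem_image.mpr ⟨z + (A.interpG unr).n, hz, by omega⟩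
      set Sb := (S.filter (fun x => (A.interpG unr).n ≤ x)).image (· - (A.interpG unr).n)
      set Tb := T.image (· - (A.interpG unr).n)
      have hSbound : ∀ z ∈ Sb, z < (C.interpG unr).n := by
        intro z hz
        have := (hcov (z + (A.interpG unr).n)).mpr (Or.inl ((mem_Sb z).mp hz))
        omega
      have hTbound : ∀ z ∈ Tb, z < (C.interpG unr).n := by
        intro z hz
        have := (hcov (z + (A.interpG unr).n)).mpr (Or.inr ((mem_Tb z).mp hz))
        omega
      obtain ⟨C₁, C₂, hpC₁, hpC₂, hceq, hiso₁, hiso₂⟩ := ihC hp.2 he.2 Sb Tb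
        (by
          intro i
          constructor
          · intro hi
            rcases (hcov (i + (A.interpG unr).n)).mp (by omega) with h | h
            · exact Or.inl ((mem_Sb i).mpr h)
            · exact Or.inr ((mem_Tb i).mpr h)
          · rintro (h | h)
            · have := (hcov (i + (A.interpG unr).n)).mpr (Or.inl ((mem_Sb i).mp h)); omega
            · have := (hcov (i + (A.interpG unr).n)).mpr (Or.inr ((mem_Tb i).mp h)); omega)
        (by
          intro i ⟨h1, h2⟩
          exact hdis (i + (A.interpG unr).n) ⟨(mem_Sb i).mp h1, (mem_Tb i).mp h2⟩)
        (by
          intro s' hs' t' ht'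
          have hedge := hcross _ ((mem_Sb s').mp hs') _ ((mem_Tb t').mp ht')
          rw [interp_comma, join_edge_iff] at hedge
          rcases hedge with ⟨a1, _, _⟩ | ⟨_, _, _, _, hh⟩ | ⟨a1, _, _⟩
          · omega
          · simpa [Nat.add_sub_cancel] using hh
          · omega)
      refine ⟨GCtx.comma A C₁, C₂, ⟨hp.1, hpC₁⟩, hpC₂, ?_, ?_, ?_⟩
      · exact CtxEquiv.trans _ (GCtx.comma A (GCtx.comma C₁ C₂)) _
          (ceq_comma_r hceq) (CtxEquiv.commaAssoc A C₁ C₂)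
      · have hSeq : S = Finset.range (A.interpG unr).n ∪ Sb.image (· + (A.interpG unr).n) := by
          ext x
          simp only [Finset.mem_union, Finset.mem_range, Finset.mem_image]
          constructor
          · intro hx
            by_cases hxa : x < (A.interpG unr).n
            · exact Or.inl hxa
            · have hxx : x - (A.interpG unr).n + (A.interpG unr).n = x := by omega
              exact Or.inr ⟨x - (A.interpG unr).n, (mem_Sb _).mpr (hxx.symm ▸ hx), hxx⟩
          · rintro (hx | ⟨z, hz, rfl⟩)
            · exact hlo x hx
            · exact (mem_Sb z).mp hz
        rw [interp_comma, hSeq]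
        have k := restrict_join_iso (A.interpG unr) (C.interpG unr) (Finset.range (A.interpG unr).n) Sb
          (fun x hx => Finset.mem_range.mp hx) hSbound
        exact iso_trans
          (join_congr (iso_symm (restrict_range_iso (A.interpG unr))) hiso₁) (iso_symm k)
      · have hTeq : T = (∅ : Finset ℕ) ∪ Tb.image (· + (A.interpG unr).n) := by
          ext x
          simp only [Finset.mem_union, Finset.mem_image, Finset.notMem_empty, false_or]
          constructor
          · intro hx
            have := hThi x hx
            have hxx : x - (A.interpG unr).n + (A.interpG unr).n = x := by omega
            exact ⟨x - (A.interpG unr).n, (mem_Tb _).mpr (hxx.symm ▸ hx), hxx⟩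
          · rintro ⟨z, hz, rfl⟩
            exact (mem_Tb z).mp hz
        rw [interp_comma, hTeq]
        have k := restrict_join_iso (A.interpG unr) (C.interpG unr) (∅ : Finset ℕ) Tb
          (fun x hx => absurd hx (Finset.notMem_empty x)) hTbound
        have k2 : (((A.interpG unr).restrict ∅).join ((C.interpG unr).restrict Tb)).Iso
            ((C.interpG unr).restrict Tb) :=
          nzero_join (by rw [restrict_n]; exact Finset.card_empty)
        exact iso_trans hiso₂ (iso_symm (iso_trans k k2))
    · -- S is contained in the low block: the high block is contained in T
      push_neg at hme
      have hhiT : ∀ i, (A.interpG unr).n ≤ i → i < (A.interpG unr).n + (C.interpG unr).n →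
          i ∈ T := by
        intro i h1 h2
        rcases (hcov i).mp (by omega) with h | h
        · have := hme i h; omega
        · exact h
      have memTa : ∀ z, z ∈ T.filter (fun x => x < (A.interpG unr).n) ↔
          (z ∈ T ∧ z < (A.interpG unr).n) := by
        intro z
        rw [Finset.mem_filter]
      set Ta := T.filter (fun x => x < (A.interpG unr).n)
      obtain ⟨A₁, A₂, hpA₁, hpA₂, hceq, hiso₁, hiso₂⟩ := ihA hp.1 he.1 S Ta
        (by
          intro i
          constructor
          · intro hi
            rcases (hcov i).mp (by omega) with h | h
            · exact Or.inl h
            · exact Or.inr ((memTa i).mpr ⟨h, hi⟩)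
          · rintro (h | h)
            · exact hme i h
            · exact ((memTa i).mp h).2)
        (by
          intro i ⟨h1, h2⟩
          exact hdis i ⟨h1, ((memTa i).mp h2).1⟩)
        (by
          intro s' hs' t' ht'
          have hedge := hcross _ hs' _ ((memTa t').mp ht').1
          have hsa := hme _ hs'
          have hta := ((memTa t').mp ht').2
          rw [interp_comma, join_edge_iff] at hedge
          rcases hedge with ⟨_, _, hh⟩ | ⟨a1, _, _, _, _⟩ | ⟨_, a2, _⟩
          · exact hh
          · omega
          · omega)
      refine ⟨A₁, GCtx.comma A₂ C, hpA₁, ⟨hpA₂, hp.2⟩, ?_, ?_, ?_⟩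
      · exact CtxEquiv.trans _ (GCtx.comma (GCtx.comma A₁ A₂) C) _
          (ceq_comma_l hceq) (CtxEquiv.symm _ _ (CtxEquiv.commaAssoc A₁ A₂ C))
      · have hSeq : S = S ∪ (∅ : Finset ℕ).image (· + (A.interpG unr).n) := by simp
        rw [interp_comma, hSeq]
        have k := restrict_join_iso (A.interpG unr) (C.interpG unr) S (∅ : Finset ℕ) hme
          (fun x hx => absurd hx (Finset.notMem_empty x))
        have k2 : (((A.interpG unr).restrict S).join ((C.interpG unr).restrict ∅)).Iso
            ((A.interpG unr).restrict S) :=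
          join_nzero (by rw [restrict_n]; exact Finset.card_empty)
        exact iso_trans hiso₁ (iso_symm (iso_trans k k2))
      · have hTeq : T = Ta ∪ (Finset.range (C.interpG unr).n).image (· + (A.interpG unr).n) := by
          ext x
          simp only [Finset.mem_union, Finset.mem_image, Finset.mem_range]
          constructor
          · intro hx
            by_cases hxa : x < (A.interpG unr).n
            · exact Or.inl ((memTa x).mpr ⟨hx, hxa⟩)
            · have hxn : x < (A.interpG unr).n + (C.interpG unr).n := by
                have := (hcov x).mpr (Or.inr hx); omega
              exact Or.inr ⟨x - (A.interpG unr).n, by omega, by omega⟩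
          · rintro (hx | ⟨z, hz, rfl⟩)
            · exact ((memTa x).mp hx).1
            · exact hhiT _ (by omega) (by omega)
        rw [interp_comma, hTeq]
        have k := restrict_join_iso (A.interpG unr) (C.interpG unr) Ta
          (Finset.range (C.interpG unr).n)
          (fun x hx => ((memTa x).mp hx).2)
          (fun x hx => Finset.mem_range.mp hx)
        exact iso_trans
          (join_congr hiso₂ (iso_symm (restrict_range_iso (C.interpG unr)))) (iso_symm k)
  | par A C ihA ihC =>
    intro hp he S T hcov hdis hcross
    by_cases hS : S = ∅
    · exact join_partition_trivial unr _ hp S T hcov (Or.inl hS)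
    by_cases hT : T = ∅
    · exact join_partition_trivial unr _ hp S T hcov (Or.inr hT)
    exfalso
    have hGn : ((GCtx.par A C).interpG unr).n = (A.interpG unr).n + (C.interpG unr).n :=
      union_n _ _
    have haPos := interp_n_pos unr A hp.1 he.1
    have hcPos := interp_n_pos unr C hp.2 he.2
    obtain ⟨s, hs⟩ := Finset.nonempty_iff_ne_empty.mpr hS
    obtain ⟨t, ht⟩ := Finset.nonempty_iff_ne_empty.mpr hT
    have hcl : ∀ s ∈ S, ∀ t ∈ T, (s < (A.interpG unr).n ∧ t < (A.interpG unr).n) ∨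
        ((A.interpG unr).n ≤ s ∧ (A.interpG unr).n ≤ t) := by
      intro s hs t ht
      have hedge := hcross s hs t ht
      rw [interp_par, union_edge_iff] at hedge
      rcases hedge with ⟨h1, h2, _⟩ | ⟨h1, _, h2, _, _⟩
      · exact Or.inl ⟨h1, h2⟩
      · exact Or.inr ⟨h1, h2⟩
    rcases hcl s hs t ht with ⟨hs1, ht1⟩ | ⟨hs1, ht1⟩
    · rcases (hcov (A.interpG unr).n).mp (by omega) with h | h
      · rcases hcl _ h t ht with ⟨a1, _⟩ | ⟨_, a2⟩ <;> omega
      · rcases hcl s hs _ h with ⟨_, a1⟩ | ⟨a2, _⟩ <;> omega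
    · rcases (hcov 0).mp (by omega) with h | h
      · rcases hcl _ h t ht with ⟨_, a1⟩ | ⟨a2, _⟩ <;> omega
      · rcases hcl s hs _ h with ⟨a1, _⟩ | ⟨_, a2⟩ <;> omega

lemma union_partition (unr : B → Bool) : ∀ Γ : GCtx B, PureCtx unr Γ → EmptyFree Γ →
    ∀ S T : Finset ℕ,
    (∀ i, i < (Γ.interpG unr).n ↔ (i ∈ S ∨ i ∈ T)) →
    (∀ i, ¬(i ∈ S ∧ i ∈ T)) →
    (∀ s ∈ S, ∀ t ∈ T, ¬(Γ.interpG unr).edge s t ∧ ¬(Γ.interpG unr).edge t s) →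
    ∃ Γa Γb : GCtx B, PureCtx unr Γa ∧ PureCtx unr Γb ∧
      CtxEquiv unr Γ (GCtx.par Γa Γb) ∧
      ((Γa.interpG unr).Iso ((Γ.interpG unr).restrict S)) ∧
      ((Γb.interpG unr).Iso ((Γ.interpG unr).restrict T)) := by
  intro Γ
  induction Γ with
  | empty => exact fun _ he => he.elim
  | bind b =>
    intro hp he S T hcov hdis hcross
    by_cases hS : S = ∅
    · exact par_partition_trivial unr _ hp S T hcov (Or.inl hS)
    by_cases hT : T = ∅
    · exact par_partition_trivial unr _ hp S T hcov (Or.inr hT)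
    obtain ⟨s, hs⟩ := Finset.nonempty_iff_ne_empty.mpr hS
    obtain ⟨t, ht⟩ := Finset.nonempty_iff_ne_empty.mpr hT
    have hn1 := interp_bind_n (unr := unr) (b := b) hp
    have hsn : s < 1 := by rw [← hn1]; exact (hcov s).mpr (Or.inl hs)
    have htn : t < 1 := by rw [← hn1]; exact (hcov t).mpr (Or.inr ht)
    have : s = t := by omega
    exact absurd ⟨this ▸ hs, ht⟩ (hdis t)
  | comma A C ihA ihC =>
    intro hp he S T hcov hdis hcross
    by_cases hS : S = ∅
    · exact par_partition_trivial unr _ hp S T hcov (Or.inl hS)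
    by_cases hT : T = ∅
    · exact par_partition_trivial unr _ hp S T hcov (Or.inr hT)
    exfalso
    have hGn : ((GCtx.comma A C).interpG unr).n = (A.interpG unr).n + (C.interpG unr).n :=
      join_n _ _
    have haPos := interp_n_pos unr A hp.1 he.1
    have hcPos := interp_n_pos unr C hp.2 he.2
    obtain ⟨s, hs⟩ := Finset.nonempty_iff_ne_empty.mpr hS
    obtain ⟨t, ht⟩ := Finset.nonempty_iff_ne_empty.mpr hT
    have hjoin : ∀ x y, x < (A.interpG unr).n → (A.interpG unr).n ≤ y →
        y < (A.interpG unr).n + (C.interpG unr).n →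
        ((GCtx.comma A C).interpG unr).edge x y := by
      intro x y hx hy hy2
      rw [interp_comma, join_edge_iff]
      exact Or.inr (Or.inr ⟨hx, hy, by omega⟩)
    have hcl : ∀ s ∈ S, ∀ t ∈ T,
        (s < (A.interpG unr).n ∧ t < (A.interpG unr).n) ∨
        ((A.interpG unr).n ≤ s ∧ (A.interpG unr).n ≤ t) := by
      intro s hs t ht
      have hb1 : s < (A.interpG unr).n + (C.interpG unr).n := by
        have := (hcov s).mpr (Or.inl hs); omega
      have hb2 : t < (A.interpG unr).n + (C.interpG unr).n := by
        have := (hcov t).mpr (Or.inr ht); omega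
      by_cases h1 : s < (A.interpG unr).n <;> by_cases h2 : t < (A.interpG unr).n
      · exact Or.inl ⟨h1, h2⟩
      · exact absurd (hjoin s t h1 (by omega) hb2) (hcross s hs t ht).1
      · exact absurd (hjoin t s h2 (by omega) hb1) (hcross s hs t ht).2
      · exact Or.inr ⟨by omega, by omega⟩
    rcases hcl s hs t ht with ⟨hs1, ht1⟩ | ⟨hs1, ht1⟩
    · rcases (hcov (A.interpG unr).n).mp (by omega) with h | h
      · rcases hcl _ h t ht with ⟨a1, _⟩ | ⟨_, a2⟩ <;> omega
      · rcases hcl s hs _ h with ⟨_, a1⟩ | ⟨a2, _⟩ <;> omega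
    · rcases (hcov 0).mp (by omega) with h | h
      · rcases hcl _ h t ht with ⟨_, a1⟩ | ⟨a2, _⟩ <;> omega
      · rcases hcl s hs _ h with ⟨a1, _⟩ | ⟨_, a2⟩ <;> omega
  | par A C ihA ihC =>
    intro hp he S T hcov hdis hcross
    have hGn : ((GCtx.par A C).interpG unr).n = (A.interpG unr).n + (C.interpG unr).n :=
      union_n _ _
    have memSb : ∀ z, z ∈ (S.filter (fun x => (A.interpG unr).n ≤ x)).image
        (· - (A.interpG unr).n) ↔ (z + (A.interpG unr).n) ∈ S := by
      intro z
      constructor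
      · intro hz
        obtain ⟨x, hx, hxz⟩ := Finset.mem_image.mp hz
        obtain ⟨hxS, hxa⟩ := Finset.mem_filter.mp hx
        have hzz : z + (A.interpG unr).n = x := by omega
        rwa [hzz]
      · intro hz
        exact Finset.mem_image.mpr ⟨z + (A.interpG unr).n,
          Finset.mem_filter.mpr ⟨hz, by simp⟩, by omega⟩
    have memTb : ∀ z, z ∈ (T.filter (fun x => (A.interpG unr).n ≤ x)).image
        (· - (A.interpG unr).n) ↔ (z + (A.interpG unr).n) ∈ T := by
      intro z
      constructor
      · intro hz
        obtain ⟨x, hx, hxz⟩ := Finset.mem_image.mp hz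
        obtain ⟨hxS, hxa⟩ := Finset.mem_filter.mp hx
        have hzz : z + (A.interpG unr).n = x := by omega
        rwa [hzz]
      · intro hz
        exact Finset.mem_image.mpr ⟨z + (A.interpG unr).n,
          Finset.mem_filter.mpr ⟨hz, by simp⟩, by omega⟩
    have memSa : ∀ z, z ∈ S.filter (fun x => x < (A.interpG unr).n) ↔
        (z ∈ S ∧ z < (A.interpG unr).n) := fun z => Finset.mem_filter
    have memTa : ∀ z, z ∈ T.filter (fun x => x < (A.interpG unr).n) ↔
        (z ∈ T ∧ z < (A.interpG unr).n) := fun z => Finset.mem_filter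
    set Sa := S.filter (fun x => x < (A.interpG unr).n)
    set Ta := T.filter (fun x => x < (A.interpG unr).n)
    set Sb := (S.filter (fun x => (A.interpG unr).n ≤ x)).image (· - (A.interpG unr).n)
    set Tb := (T.filter (fun x => (A.interpG unr).n ≤ x)).image (· - (A.interpG unr).n)
    have hSbound : ∀ z ∈ Sb, z < (C.interpG unr).n := by
      intro z hz
      have := (hcov (z + (A.interpG unr).n)).mpr (Or.inl ((memSb z).mp hz))
      omega
    have hTbound : ∀ z ∈ Tb, z < (C.interpG unr).n := by
      intro z hz
      have := (hcov (z + (A.interpG unr).n)).mpr (Or.inr ((memTb z).mp hz))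
      omega
    obtain ⟨A₁, A₂, hpA₁, hpA₂, hceqA, hisoA₁, hisoA₂⟩ := ihA hp.1 he.1 Sa Ta
      (by
        intro i
        constructor
        · intro hi
          rcases (hcov i).mp (by omega) with h | h
          · exact Or.inl ((memSa i).mpr ⟨h, hi⟩)
          · exact Or.inr ((memTa i).mpr ⟨h, hi⟩)
        · rintro (h | h)
          · exact ((memSa i).mp h).2
          · exact ((memTa i).mp h).2)
      (by
        intro i ⟨h1, h2⟩
        exact hdis i ⟨((memSa i).mp h1).1, ((memTa i).mp h2).1⟩)
      (by
        intro s' hs' t' ht'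
        have h := hcross s' ((memSa s').mp hs').1 t' ((memTa t').mp ht').1
        constructor
        · intro hh
          exact h.1 (by rw [interp_par]; exact Or.inl hh)
        · intro hh
          exact h.2 (by rw [interp_par]; exact Or.inl hh))
    obtain ⟨C₁, C₂, hpC₁, hpC₂, hceqC, hisoC₁, hisoC₂⟩ := ihC hp.2 he.2 Sb Tb
      (by
        intro i
        constructor
        · intro hi
          rcases (hcov (i + (A.interpG unr).n)).mp (by omega) with h | h
          · exact Or.inl ((memSb i).mpr h)
          · exact Or.inr ((memTb i).mpr h)
        · rintro (h | h)
          · have := (hcov (i + (A.interpG unr).n)).mpr (Or.inl ((memSb i).mp h)); omega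
          · have := (hcov (i + (A.interpG unr).n)).mpr (Or.inr ((memTb i).mp h)); omega)
      (by
        intro i ⟨h1, h2⟩
        exact hdis (i + (A.interpG unr).n) ⟨(memSb i).mp h1, (memTb i).mp h2⟩)
      (by
        intro s' hs' t' ht'
        have h := hcross _ ((memSb s').mp hs') _ ((memTb t').mp ht')
        constructor
        · intro hh
          refine h.1 ?_
          rw [interp_par]
          exact Or.inr ⟨by omega, by omega, by simpa [Nat.add_sub_cancel] using hh⟩
        · intro hh
          refine h.2 ?_
          rw [interp_par]
          exact Or.inr ⟨by omega, by omega, by simpa [Nat.add_sub_cancel] using hh⟩)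
    refine ⟨GCtx.par A₁ C₁, GCtx.par A₂ C₂, ⟨hpA₁, hpC₁⟩, ⟨hpA₂, hpC₂⟩, ?_, ?_, ?_⟩
    · exact CtxEquiv.trans _ (GCtx.par (GCtx.par A₁ A₂) (GCtx.par C₁ C₂)) _
        (ceq_par hceqA hceqC) (par_medial A₁ A₂ C₁ C₂)
    · have hSeq : S = Sa ∪ Sb.image (· + (A.interpG unr).n) := by
        ext x
        simp only [Finset.mem_union, Finset.mem_image]
        constructor
        · intro hx
          by_cases hxa : x < (A.interpG unr).n
          · exact Or.inl ((memSa x).mpr ⟨hx, hxa⟩)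
          · have hxx : x - (A.interpG unr).n + (A.interpG unr).n = x := by omega
            exact Or.inr ⟨x - (A.interpG unr).n, (memSb _).mpr (hxx.symm ▸ hx), hxx⟩
        · rintro (hx | ⟨z, hz, rfl⟩)
          · exact ((memSa x).mp hx).1
          · exact (memSb z).mp hz
      rw [interp_par, hSeq]
      have k := restrict_union_iso (A.interpG unr) (C.interpG unr) Sa Sb
        (fun x hx => ((memSa x).mp hx).2)
      exact iso_trans (union_congr hisoA₁ hisoC₁) (iso_symm k)
    · have hTeq : T = Ta ∪ Tb.image (· + (A.interpG unr).n) := by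
        ext x
        simp only [Finset.mem_union, Finset.mem_image]
        constructor
        · intro hx
          by_cases hxa : x < (A.interpG unr).n
          · exact Or.inl ((memTa x).mpr ⟨hx, hxa⟩)
          · have hxx : x - (A.interpG unr).n + (A.interpG unr).n = x := by omega
            exact Or.inr ⟨x - (A.interpG unr).n, (memTb _).mpr (hxx.symm ▸ hx), hxx⟩
        · rintro (hx | ⟨z, hz, rfl⟩)
          · exact ((memTa x).mp hx).1
          · exact (memTb z).mp hz
      rw [interp_par, hTeq]
      have k := restrict_union_iso (A.interpG unr) (C.interpG unr) Ta Tb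
        (fun x hx => ((memTa x).mp hx).2)
      exact iso_trans (union_congr hisoA₂ hisoC₂) (iso_symm k)

end Partition


section Complete
variable {B : Type} [Inhabited B]

open Graph

theorem pure_complete (unr : B → Bool) : ∀ n : ℕ, ∀ Γ₁ Γ₂ : GCtx B,
    PureCtx unr Γ₁ → PureCtx unr Γ₂ → EmptyFree Γ₁ → EmptyFree Γ₂ →
    (Γ₂.interpG unr).n = n →
    ((Γ₁.interpG unr).Iso (Γ₂.interpG unr)) → CtxEquiv unr Γ₁ Γ₂ := by
  intro n
  induction n using Nat.strong_induction_on with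
  | _ n IH =>
  intro Γ₁ Γ₂ hp₁ hp₂ he₁ he₂ hn hiso
  cases Γ₁ with
  | empty => exact he₁.elim
  | bind b₁ =>
    cases Γ₂ with
    | empty => exact he₂.elim
    | bind b₂ =>
      have hp₁' : unr b₁ = false := hp₁
      have hp₂' : unr b₂ = false := hp₂
      obtain ⟨hneq, g, hlt, hinj, hsurj, hedge, hlab⟩ := iso_elim hiso
      have h0 : (0 : ℕ) < ((GCtx.bind b₁).interpG unr).n := by
        rw [interp_bind_n hp₁']; omega
      have hl := hlab 0 h0
      rw [interp_bind_label hp₁', interp_bind_label hp₂'] at hl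
      rw [hl]
      exact CtxEquiv.refl _
    | comma C D =>
      exfalso
      have e := iso_n_eq hiso
      rw [interp_bind_n hp₁, interp_comma, join_n] at e
      have := interp_n_pos unr C hp₂.1 he₂.1
      have := interp_n_pos unr D hp₂.2 he₂.2
      omega
    | par C D =>
      exfalso
      have e := iso_n_eq hiso
      rw [interp_bind_n hp₁, interp_par, union_n] at e
      have := interp_n_pos unr C hp₂.1 he₂.1
      have := interp_n_pos unr D hp₂.2 he₂.2
      omega
  | comma A A' =>
    cases Γ₂ with
    | empty => exact he₂.elim
    | bind b₂ =>
      exfalso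
      have e := iso_n_eq hiso
      rw [interp_bind_n hp₂, interp_comma, join_n] at e
      have := interp_n_pos unr A hp₁.1 he₁.1
      have := interp_n_pos unr A' hp₁.2 he₁.2
      omega
    | par C D =>
      exfalso
      rw [interp_comma, interp_par] at hiso
      exact join_union_absurd (interp_n_pos unr A hp₁.1 he₁.1)
        (interp_n_pos unr A' hp₁.2 he₁.2) (interp_n_pos unr C hp₂.1 he₂.1)
        (interp_n_pos unr D hp₂.2 he₂.2) hiso
    | comma C D =>
      obtain ⟨hneq, g, hlt, hinj, hsurj, hedge, hlab⟩ := iso_elim hiso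
      have hcpos := interp_n_pos unr C hp₂.1 he₂.1
      have hdpos := interp_n_pos unr D hp₂.2 he₂.2
      have hn2 : ((GCtx.comma C D).interpG unr).n =
          (C.interpG unr).n + (D.interpG unr).n := join_n _ _
      have hn1 : ((GCtx.comma A A').interpG unr).n =
          (C.interpG unr).n + (D.interpG unr).n := hneq.trans hn2
      obtain ⟨Γa, Γb, hpa, hpb, hceq, hisoa, hisob⟩ :=
        join_partition unr (GCtx.comma A A') hp₁ he₁
          ((Finset.range (C.interpG unr).n).image g)
          (((Finset.range ((C.interpG unr).n + (D.interpG unr).n)).filter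
            (fun x => (C.interpG unr).n ≤ x)).image g)
          (by
            intro i
            constructor
            · intro hi
              obtain ⟨w, hw, hgw⟩ := hsurj i hi
              by_cases hwc : w < (C.interpG unr).n
              · exact Or.inl (Finset.mem_image.mpr ⟨w, Finset.mem_range.mpr hwc, hgw⟩)
              · exact Or.inr (Finset.mem_image.mpr ⟨w,
                  Finset.mem_filter.mpr ⟨Finset.mem_range.mpr (by omega), by omega⟩, hgw⟩)
            · rintro (h | h)
              · obtain ⟨z, hz, rfl⟩ := Finset.mem_image.mp h
                have := Finset.mem_range.mp hz
                exact hlt z (by omega)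
              · obtain ⟨z, hz, rfl⟩ := Finset.mem_image.mp h
                have := Finset.mem_range.mp (Finset.mem_filter.mp hz).1
                exact hlt z (by omega))
          (by
            intro i ⟨h1, h2⟩
            obtain ⟨z1, hz1, hg1⟩ := Finset.mem_image.mp h1
            obtain ⟨z2, hz2, hg2⟩ := Finset.mem_image.mp h2
            have hb1 := Finset.mem_range.mp hz1
            have hb2 := Finset.mem_range.mp (Finset.mem_filter.mp hz2).1
            have hc2 := (Finset.mem_filter.mp hz2).2
            have := hinj z1 z2 (by omega) (by omega) (hg1.trans hg2.symm)
            omega)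
          (by
            intro s hs t ht
            obtain ⟨u, hu, rfl⟩ := Finset.mem_image.mp hs
            obtain ⟨v, hv, rfl⟩ := Finset.mem_image.mp ht
            have hub := Finset.mem_range.mp hu
            have hvb := Finset.mem_range.mp (Finset.mem_filter.mp hv).1
            have hvc := (Finset.mem_filter.mp hv).2
            refine (hedge u v (by omega) (by omega)).mpr ?_
            rw [interp_comma, join_edge_iff]
            exact Or.inr (Or.inr ⟨by omega, by omega, by omega⟩))
      have m1 : (((GCtx.comma A A').interpG unr).restrict
          ((Finset.range (C.interpG unr).n).image g)).Iso
          (((GCtx.comma C D).interpG unr).restrict (Finset.range (C.interpG unr).n)) := by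
        refine restrict_map_iso _ _ _ g ?_ ?_ ?_
        · intro u hu v hv h
          exact hinj u v (by have := Finset.mem_range.mp hu; omega)
            (by have := Finset.mem_range.mp hv; omega) h
        · intro u hu v hv
          exact hedge u v (by have := Finset.mem_range.mp hu; omega)
            (by have := Finset.mem_range.mp hv; omega)
        · intro u hu
          exact hlab u (by have := Finset.mem_range.mp hu; omega)
      have m2 : (((GCtx.comma C D).interpG unr).restrict
          (Finset.range (C.interpG unr).n)).Iso (C.interpG unr) := by
        have e : Finset.range (C.interpG unr).n ∪
            (∅ : Finset ℕ).image (· + (C.interpG unr).n) =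
            Finset.range (C.interpG unr).n := by simp
        have k1 := restrict_join_iso (C.interpG unr) (D.interpG unr)
          (Finset.range (C.interpG unr).n) (∅ : Finset ℕ)
          (fun x hx => Finset.mem_range.mp hx)
          (fun x hx => absurd hx (Finset.notMem_empty x))
        rw [e] at k1
        have k2 : (((C.interpG unr).restrict (Finset.range (C.interpG unr).n)).join
            ((D.interpG unr).restrict ∅)).Iso
            ((C.interpG unr).restrict (Finset.range (C.interpG unr).n)) :=
          join_nzero (by rw [restrict_n]; exact Finset.card_empty)
        exact iso_trans (iso_trans k1 k2) (restrict_range_iso (C.interpG unr))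
      have m1' : (((GCtx.comma A A').interpG unr).restrict
          ((((Finset.range ((C.interpG unr).n + (D.interpG unr).n)).filter
            (fun x => (C.interpG unr).n ≤ x))).image g)).Iso
          (((GCtx.comma C D).interpG unr).restrict
            ((Finset.range ((C.interpG unr).n + (D.interpG unr).n)).filter
              (fun x => (C.interpG unr).n ≤ x))) := by
        refine restrict_map_iso _ _ _ g ?_ ?_ ?_
        · intro u hu v hv h
          have h1 := Finset.mem_range.mp (Finset.mem_filter.mp hu).1
          have h2 := Finset.mem_range.mp (Finset.mem_filter.mp hv).1
          exact hinj u v (by omega) (by omega) h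
        · intro u hu v hv
          have h1 := Finset.mem_range.mp (Finset.mem_filter.mp hu).1
          have h2 := Finset.mem_range.mp (Finset.mem_filter.mp hv).1
          exact hedge u v (by omega) (by omega)
        · intro u hu
          have h1 := Finset.mem_range.mp (Finset.mem_filter.mp hu).1
          exact hlab u (by omega)
      have m2' : (((GCtx.comma C D).interpG unr).restrict
          ((Finset.range ((C.interpG unr).n + (D.interpG unr).n)).filter
            (fun x => (C.interpG unr).n ≤ x))).Iso (D.interpG unr) := by
        have e : (∅ : Finset ℕ) ∪
            (Finset.range (D.interpG unr).n).image (· + (C.interpG unr).n) =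
            (Finset.range ((C.interpG unr).n + (D.interpG unr).n)).filter
              (fun x => (C.interpG unr).n ≤ x) := by
          ext x
          simp only [Finset.mem_union, Finset.mem_image, Finset.mem_range,
            Finset.mem_filter, Finset.notMem_empty, false_or]
          constructor
          · rintro ⟨z, hz, rfl⟩
            exact ⟨by omega, by omega⟩
          · rintro ⟨h1, h2⟩
            exact ⟨x - (C.interpG unr).n, by omega, by omega⟩
        have k1 := restrict_join_iso (C.interpG unr) (D.interpG unr)
          (∅ : Finset ℕ) (Finset.range (D.interpG unr).n)
          (fun x hx => absurd hx (Finset.notMem_empty x))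
          (fun x hx => Finset.mem_range.mp hx)
        rw [e] at k1
        have k2 : (((C.interpG unr).restrict ∅).join
            ((D.interpG unr).restrict (Finset.range (D.interpG unr).n))).Iso
            ((D.interpG unr).restrict (Finset.range (D.interpG unr).n)) :=
          nzero_join (by rw [restrict_n]; exact Finset.card_empty)
        exact iso_trans (iso_trans k1 k2) (restrict_range_iso (D.interpG unr))
      have isoaC : ((Γa.interpG unr).Iso (C.interpG unr)) :=
        iso_trans hisoa (iso_trans m1 m2)
      have isobD : ((Γb.interpG unr).Iso (D.interpG unr)) :=
        iso_trans hisob (iso_trans m1' m2')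
      obtain ⟨Γa', hpa', hceqa', hefa'⟩ := exists_emptyFree unr Γa hpa
      obtain ⟨Γb', hpb', hceqb', hefb'⟩ := exists_emptyFree unr Γb hpb
      have hisoa' : ((Γa'.interpG unr).Iso (C.interpG unr)) :=
        iso_trans (iso_symm (equiv_sound unr hceqa').1) isoaC
      have hisob' : ((Γb'.interpG unr).Iso (D.interpG unr)) :=
        iso_trans (iso_symm (equiv_sound unr hceqb').1) isobD
      rcases hefa' with rfl | hefa'
      · exfalso
        have := iso_n_eq hisoa'
        simp only [GCtx.interpG] at this
        rw [show (Graph.zero B).n = 0 from rfl] at this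
        omega
      rcases hefb' with rfl | hefb'
      · exfalso
        have := iso_n_eq hisob'
        simp only [GCtx.interpG] at this
        rw [show (Graph.zero B).n = 0 from rfl] at this
        omega
      have hca := IH (C.interpG unr).n (by omega) Γa' C hpa' hp₂.1 hefa' he₂.1 rfl hisoa'
      have hdb := IH (D.interpG unr).n (by omega) Γb' D hpb' hp₂.2 hefb' he₂.2 rfl hisob'
      exact CtxEquiv.trans _ _ _ hceq
        (CtxEquiv.trans _ _ _ (ceq_comma hceqa' hceqb') (ceq_comma hca hdb))
  | par A A' =>
    cases Γ₂ with
    | empty => exact he₂.elim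
    | bind b₂ =>
      exfalso
      have e := iso_n_eq hiso
      rw [interp_bind_n hp₂, interp_par, union_n] at e
      have := interp_n_pos unr A hp₁.1 he₁.1
      have := interp_n_pos unr A' hp₁.2 he₁.2
      omega
    | comma C D =>
      exfalso
      rw [interp_comma, interp_par] at hiso
      exact join_union_absurd (interp_n_pos unr C hp₂.1 he₂.1)
        (interp_n_pos unr D hp₂.2 he₂.2) (interp_n_pos unr A hp₁.1 he₁.1)
        (interp_n_pos unr A' hp₁.2 he₁.2) (iso_symm hiso)
    | par C D =>
      obtain ⟨hneq, g, hlt, hinj, hsurj, hedge, hlab⟩ := iso_elim hiso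
      have hcpos := interp_n_pos unr C hp₂.1 he₂.1
      have hdpos := interp_n_pos unr D hp₂.2 he₂.2
      have hn2 : ((GCtx.par C D).interpG unr).n =
          (C.interpG unr).n + (D.interpG unr).n := union_n _ _
      have hn1 : ((GCtx.par A A').interpG unr).n =
          (C.interpG unr).n + (D.interpG unr).n := hneq.trans hn2
      have hnc : ∀ u v, u < (C.interpG unr).n → (C.interpG unr).n ≤ v →
          v < (C.interpG unr).n + (D.interpG unr).n →
          ¬((GCtx.par C D).interpG unr).edge u v ∧
            ¬((GCtx.par C D).interpG unr).edge v u := by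
        intro u v h1 h2 h3
        constructor
        · rw [interp_par, union_edge_iff]
          rintro (⟨_, a2, _⟩ | ⟨a1, _, _, _, _⟩) <;> omega
        · rw [interp_par, union_edge_iff]
          rintro (⟨a1, _, _⟩ | ⟨_, _, a2, _, _⟩) <;> omega
      obtain ⟨Γa, Γb, hpa, hpb, hceq, hisoa, hisob⟩ :=
        union_partition unr (GCtx.par A A') hp₁ he₁
          ((Finset.range (C.interpG unr).n).image g)
          (((Finset.range ((C.interpG unr).n + (D.interpG unr).n)).filter
            (fun x => (C.interpG unr).n ≤ x)).image g)
          (by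
            intro i
            constructor
            · intro hi
              obtain ⟨w, hw, hgw⟩ := hsurj i hi
              by_cases hwc : w < (C.interpG unr).n
              · exact Or.inl (Finset.mem_image.mpr ⟨w, Finset.mem_range.mpr hwc, hgw⟩)
              · exact Or.inr (Finset.mem_image.mpr ⟨w,
                  Finset.mem_filter.mpr ⟨Finset.mem_range.mpr (by omega), by omega⟩, hgw⟩)
            · rintro (h | h)
              · obtain ⟨z, hz, rfl⟩ := Finset.mem_image.mp h
                have := Finset.mem_range.mp hz
                exact hlt z (by omega)
              · obtain ⟨z, hz, rfl⟩ := Finset.mem_image.mp h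
                have := Finset.mem_range.mp (Finset.mem_filter.mp hz).1
                exact hlt z (by omega))
          (by
            intro i ⟨h1, h2⟩
            obtain ⟨z1, hz1, hg1⟩ := Finset.mem_image.mp h1
            obtain ⟨z2, hz2, hg2⟩ := Finset.mem_image.mp h2
            have hb1 := Finset.mem_range.mp hz1
            have hb2 := Finset.mem_range.mp (Finset.mem_filter.mp hz2).1
            have hc2 := (Finset.mem_filter.mp hz2).2
            have := hinj z1 z2 (by omega) (by omega) (hg1.trans hg2.symm)
            omega)
          (by
            intro s hs t ht
            obtain ⟨u, hu, rfl⟩ := Finset.mem_image.mp hs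
            obtain ⟨v, hv, rfl⟩ := Finset.mem_image.mp ht
            have hub := Finset.mem_range.mp hu
            have hvb := Finset.mem_range.mp (Finset.mem_filter.mp hv).1
            have hvc := (Finset.mem_filter.mp hv).2
            have hh := hnc u v (by omega) (by omega) (by omega)
            constructor
            · intro hcon
              exact hh.1 ((hedge u v (by omega) (by omega)).mp hcon)
            · intro hcon
              exact hh.2 ((hedge v u (by omega) (by omega)).mp hcon))
      have m1 : (((GCtx.par A A').interpG unr).restrict
          ((Finset.range (C.interpG unr).n).image g)).Iso
          (((GCtx.par C D).interpG unr).restrict (Finset.range (C.interpG unr).n)) := by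
        refine restrict_map_iso _ _ _ g ?_ ?_ ?_
        · intro u hu v hv h
          exact hinj u v (by have := Finset.mem_range.mp hu; omega)
            (by have := Finset.mem_range.mp hv; omega) h
        · intro u hu v hv
          exact hedge u v (by have := Finset.mem_range.mp hu; omega)
            (by have := Finset.mem_range.mp hv; omega)
        · intro u hu
          exact hlab u (by have := Finset.mem_range.mp hu; omega)
      have m2 : (((GCtx.par C D).interpG unr).restrict
          (Finset.range (C.interpG unr).n)).Iso (C.interpG unr) := by
        have e : Finset.range (C.interpG unr).n ∪
            (∅ : Finset ℕ).image (· + (C.interpG unr).n) =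
            Finset.range (C.interpG unr).n := by simp
        have k1 := restrict_union_iso (C.interpG unr) (D.interpG unr)
          (Finset.range (C.interpG unr).n) (∅ : Finset ℕ)
          (fun x hx => Finset.mem_range.mp hx)
        rw [e] at k1
        have k2 : (((C.interpG unr).restrict (Finset.range (C.interpG unr).n)).union
            ((D.interpG unr).restrict ∅)).Iso
            ((C.interpG unr).restrict (Finset.range (C.interpG unr).n)) :=
          union_nzero (by rw [restrict_n]; exact Finset.card_empty)
        exact iso_trans (iso_trans k1 k2) (restrict_range_iso (C.interpG unr))
      have m1' : (((GCtx.par A A').interpG unr).restrict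
          ((((Finset.range ((C.interpG unr).n + (D.interpG unr).n)).filter
            (fun x => (C.interpG unr).n ≤ x))).image g)).Iso
          (((GCtx.par C D).interpG unr).restrict
            ((Finset.range ((C.interpG unr).n + (D.interpG unr).n)).filter
              (fun x => (C.interpG unr).n ≤ x))) := by
        refine restrict_map_iso _ _ _ g ?_ ?_ ?_
        · intro u hu v hv h
          have h1 := Finset.mem_range.mp (Finset.mem_filter.mp hu).1
          have h2 := Finset.mem_range.mp (Finset.mem_filter.mp hv).1
          exact hinj u v (by omega) (by omega) h
        · intro u hu v hv
          have h1 := Finset.mem_range.mp (Finset.mem_filter.mp hu).1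
          have h2 := Finset.mem_range.mp (Finset.mem_filter.mp hv).1
          exact hedge u v (by omega) (by omega)
        · intro u hu
          have h1 := Finset.mem_range.mp (Finset.mem_filter.mp hu).1
          exact hlab u (by omega)
      have m2' : (((GCtx.par C D).interpG unr).restrict
          ((Finset.range ((C.interpG unr).n + (D.interpG unr).n)).filter
            (fun x => (C.interpG unr).n ≤ x))).Iso (D.interpG unr) := by
        have e : (∅ : Finset ℕ) ∪
            (Finset.range (D.interpG unr).n).image (· + (C.interpG unr).n) =
            (Finset.range ((C.interpG unr).n + (D.interpG unr).n)).filter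
              (fun x => (C.interpG unr).n ≤ x) := by
          ext x
          simp only [Finset.mem_union, Finset.mem_image, Finset.mem_range,
            Finset.mem_filter, Finset.notMem_empty, false_or]
          constructor
          · rintro ⟨z, hz, rfl⟩
            exact ⟨by omega, by omega⟩
          · rintro ⟨h1, h2⟩
            exact ⟨x - (C.interpG unr).n, by omega, by omega⟩
        have k1 := restrict_union_iso (C.interpG unr) (D.interpG unr)
          (∅ : Finset ℕ) (Finset.range (D.interpG unr).n)
          (fun x hx => absurd hx (Finset.notMem_empty x))
        rw [e] at k1
        have k2 : (((C.interpG unr).restrict ∅).union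
            ((D.interpG unr).restrict (Finset.range (D.interpG unr).n))).Iso
            ((D.interpG unr).restrict (Finset.range (D.interpG unr).n)) :=
          nzero_union (by rw [restrict_n]; exact Finset.card_empty)
        exact iso_trans (iso_trans k1 k2) (restrict_range_iso (D.interpG unr))
      have isoaC : ((Γa.interpG unr).Iso (C.interpG unr)) :=
        iso_trans hisoa (iso_trans m1 m2)
      have isobD : ((Γb.interpG unr).Iso (D.interpG unr)) :=
        iso_trans hisob (iso_trans m1' m2')
      obtain ⟨Γa', hpa', hceqa', hefa'⟩ := exists_emptyFree unr Γa hpa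
      obtain ⟨Γb', hpb', hceqb', hefb'⟩ := exists_emptyFree unr Γb hpb
      have hisoa' : ((Γa'.interpG unr).Iso (C.interpG unr)) :=
        iso_trans (iso_symm (equiv_sound unr hceqa').1) isoaC
      have hisob' : ((Γb'.interpG unr).Iso (D.interpG unr)) :=
        iso_trans (iso_symm (equiv_sound unr hceqb').1) isobD
      rcases hefa' with rfl | hefa'
      · exfalso
        have := iso_n_eq hisoa'
        simp only [GCtx.interpG] at this
        rw [show (Graph.zero B).n = 0 from rfl] at this
        omega
      rcases hefb' with rfl | hefb'
      · exfalso
        have := iso_n_eq hisob'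
        simp only [GCtx.interpG] at this
        rw [show (Graph.zero B).n = 0 from rfl] at this
        omega
      have hca := IH (C.interpG unr).n (by omega) Γa' C hpa' hp₂.1 hefa' he₂.1 rfl hisoa'
      have hdb := IH (D.interpG unr).n (by omega) Γb' D hpb' hp₂.2 hefb' he₂.2 rfl hisob'
      exact CtxEquiv.trans _ _ _ hceq
        (CtxEquiv.trans _ _ _ (ceq_par hceqa' hceqb') (ceq_par hca hdb))

end Complete

section Unrestricted
variable {B : Type} [Inhabited B]

open Graph

def strip (unr : B → Bool) : GCtx B → GCtx B
  | .empty => .empty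
  | .bind b => if unr b then .empty else .bind b
  | .comma A C => .comma (strip unr A) (strip unr C)
  | .par A C => .par (strip unr A) (strip unr C)

def parList : List B → GCtx B
  | [] => .empty
  | b :: l => .par (.bind b) (parList l)

def unrs (unr : B → Bool) : GCtx B → List B
  | .empty => []
  | .bind b => if unr b then [b] else []
  | .comma A C => unrs unr A ++ unrs unr C
  | .par A C => unrs unr A ++ unrs unr C

lemma strip_pure (unr : B → Bool) : ∀ Γ : GCtx B, PureCtx unr (strip unr Γ) := by
  intro Γ
  induction Γ with
  | empty => trivial
  | bind b =>
    simp only [strip]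
    split
    · trivial
    · rename_i h
      simpa [PureCtx] using h
  | comma A C ihA ihC => exact ⟨ihA, ihC⟩
  | par A C ihA ihC => exact ⟨ihA, ihC⟩

lemma interp_strip (unr : B → Bool) : ∀ Γ : GCtx B,
    (strip unr Γ).interpG unr = Γ.interpG unr := by
  intro Γ
  induction Γ with
  | empty => rfl
  | bind b =>
    simp only [strip]
    split
    · rename_i h
      simp [GCtx.interpG, h]
    · rfl
  | comma A C ihA ihC => simp only [strip, GCtx.interpG, ihA, ihC]
  | par A C ihA ihC => simp only [strip, GCtx.interpG, ihA, ihC]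

lemma unrs_all (unr : B → Bool) : ∀ Γ : GCtx B, ∀ b ∈ unrs unr Γ, unr b = true := by
  intro Γ
  induction Γ with
  | empty => simp [unrs]
  | bind b =>
    intro c hc
    simp only [unrs] at hc
    split at hc
    · rename_i h
      simp only [List.mem_singleton] at hc
      rwa [hc]
    · simp at hc
  | comma A C ihA ihC =>
    intro c hc
    rcases List.mem_append.mp hc with h | h
    · exact ihA c h
    · exact ihC c h
  | par A C ihA ihC =>
    intro c hc
    rcases List.mem_append.mp hc with h | h
    · exact ihA c h
    · exact ihC c h

lemma unrSet_eq (unr : B → Bool) : ∀ Γ : GCtx B,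
    GCtx.unrSet unr Γ = {x | x ∈ unrs unr Γ} := by
  intro Γ
  induction Γ with
  | empty => simp [GCtx.unrSet, unrs]
  | bind b =>
    simp only [GCtx.unrSet, unrs]
    split <;> simp
  | comma A C ihA ihC =>
    simp only [GCtx.unrSet, unrs, ihA, ihC]
    ext x; simp
  | par A C ihA ihC =>
    simp only [GCtx.unrSet, unrs, ihA, ihC]
    ext x; simp

def GPat.comp : GPat B → GPat B → GPat B
  | .hole, Q => Q
  | .commaL P Δ, Q => .commaL (GPat.comp P Q) Δ
  | .commaR Δ P, Q => .commaR Δ (GPat.comp P Q)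
  | .parL P Δ, Q => .parL (GPat.comp P Q) Δ
  | .parR Δ P, Q => .parR Δ (GPat.comp P Q)

lemma fill_comp : ∀ (P Q : GPat B) (Γ : GCtx B),
    (GPat.comp P Q).fill Γ = P.fill (Q.fill Γ) := by
  intro P
  induction P with
  | hole => intro Q Γ; rfl
  | commaL P Δ ih => intro Q Γ; simp only [GPat.comp, GPat.fill, ih]
  | commaR Δ P ih => intro Q Γ; simp only [GPat.comp, GPat.fill, ih]
  | parL P Δ ih => intro Q Γ; simp only [GPat.comp, GPat.fill, ih]
  | parR Δ P ih => intro Q Γ; simp only [GPat.comp, GPat.fill, ih]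

lemma move_parList {unr : B → Bool} : ∀ (l : List B), (∀ b ∈ l, unr b = true) →
    ∀ P : GPat B,
    CtxEquiv unr (P.fill (parList l)) (GCtx.par (P.fill GCtx.empty) (parList l)) := by
  intro l
  induction l with
  | nil =>
    intro _ P
    exact CtxEquiv.symm _ _
      (CtxEquiv.trans _ _ _ (CtxEquiv.parComm _ _) (CtxEquiv.parId _))
  | cons b l ih =>
    intro hall P
    have hb : unr b = true := hall b (List.mem_cons_self)
    have step1 : CtxEquiv unr (P.fill (parList (b :: l)))
        (GCtx.par (P.fill (GCtx.par GCtx.empty (parList l))) (GCtx.bind b)) := by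
      have := CtxEquiv.unrMove (unr := unr)
        (GPat.comp P (GPat.parL GPat.hole (parList l))) b hb
      rw [fill_comp, fill_comp] at this
      exact this
    have step2 : CtxEquiv unr (P.fill (GCtx.par GCtx.empty (parList l)))
        (GCtx.par (P.fill GCtx.empty) (parList l)) := by
      refine CtxEquiv.trans _ (P.fill (parList l)) _ ?_
        (ih (fun c hc => hall c (List.mem_cons_of_mem _ hc)) P)
      exact CtxEquiv.congr P _ _ (CtxEquiv.parId (parList l))
    refine CtxEquiv.trans _ _ _ step1 ?_
    refine CtxEquiv.trans _ (GCtx.par (GCtx.par (P.fill GCtx.empty) (parList l))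
      (GCtx.bind b)) _ (ceq_par_l step2) ?_
    refine CtxEquiv.trans _ (GCtx.par (P.fill GCtx.empty)
      (GCtx.par (parList l) (GCtx.bind b))) _
      (CtxEquiv.symm _ _ (CtxEquiv.parAssoc _ _ _)) ?_
    exact ceq_par_r (CtxEquiv.parComm _ _)

lemma parList_append {unr : B → Bool} : ∀ l₁ l₂ : List B,
    CtxEquiv unr (parList (l₁ ++ l₂)) (GCtx.par (parList l₁) (parList l₂)) := by
  intro l₁
  induction l₁ with
  | nil =>
    intro l₂
    exact CtxEquiv.symm _ _ (CtxEquiv.parId _)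
  | cons b l ih =>
    intro l₂
    refine CtxEquiv.trans _ (GCtx.par (GCtx.bind b)
      (GCtx.par (parList l) (parList l₂))) _ (ceq_par_r (ih l₂)) ?_
    exact CtxEquiv.parAssoc _ _ _

lemma decompose (unr : B → Bool) : ∀ Γ : GCtx B,
    CtxEquiv unr Γ (GCtx.par (strip unr Γ) (parList (unrs unr Γ))) := by
  intro Γ
  induction Γ with
  | empty =>
    exact CtxEquiv.symm _ _ (CtxEquiv.parId _)
  | bind b =>
    by_cases hb : unr b = true
    · simp only [strip, unrs, if_pos hb]
      refine CtxEquiv.symm _ _ ?_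
      refine CtxEquiv.trans _ _ _ (CtxEquiv.parId _) ?_
      exact CtxEquiv.trans _ _ _ (CtxEquiv.parComm _ _) (CtxEquiv.parId _)
    · simp only [strip, unrs, if_neg hb]
      refine CtxEquiv.symm _ _ ?_
      exact CtxEquiv.trans _ _ _ (CtxEquiv.parComm _ _) (CtxEquiv.parId _)
  | comma A C ihA ihC =>
    have hallA := unrs_all unr A
    have hallC := unrs_all unr C
    simp only [strip, unrs]
    refine CtxEquiv.trans _ _ _ (ceq_comma ihA ihC) ?_
    have step1 : CtxEquiv unr
        (GCtx.comma (GCtx.par (strip unr A) (parList (unrs unr A)))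
          (GCtx.par (strip unr C) (parList (unrs unr C))))
        (GCtx.par (GCtx.comma (GCtx.par (strip unr A) GCtx.empty)
          (GCtx.par (strip unr C) (parList (unrs unr C)))) (parList (unrs unr A))) :=
      move_parList (unrs unr A) hallA
        (GPat.commaL (GPat.parR (strip unr A) GPat.hole)
          (GCtx.par (strip unr C) (parList (unrs unr C))))
    refine CtxEquiv.trans _ _ _ step1 ?_
    have clean1 : CtxEquiv unr (GCtx.par (strip unr A) GCtx.empty) (strip unr A) :=
      CtxEquiv.trans _ _ _ (CtxEquiv.parComm _ _) (CtxEquiv.parId _)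
    refine CtxEquiv.trans _ (GCtx.par (GCtx.comma (strip unr A)
      (GCtx.par (strip unr C) (parList (unrs unr C)))) (parList (unrs unr A))) _
      (ceq_par_l (ceq_comma_l clean1)) ?_
    have step2 : CtxEquiv unr
        (GCtx.comma (strip unr A) (GCtx.par (strip unr C) (parList (unrs unr C))))
        (GCtx.par (GCtx.comma (strip unr A) (GCtx.par (strip unr C) GCtx.empty))
          (parList (unrs unr C))) :=
      move_parList (unrs unr C) hallC
        (GPat.commaR (strip unr A) (GPat.parR (strip unr C) GPat.hole))
    refine CtxEquiv.trans _ _ _ (ceq_par_l step2) ?_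
    have clean2 : CtxEquiv unr (GCtx.par (strip unr C) GCtx.empty) (strip unr C) :=
      CtxEquiv.trans _ _ _ (CtxEquiv.parComm _ _) (CtxEquiv.parId _)
    refine CtxEquiv.trans _ (GCtx.par (GCtx.par (GCtx.comma (strip unr A) (strip unr C))
      (parList (unrs unr C))) (parList (unrs unr A))) _
      (ceq_par_l (ceq_par_l (ceq_comma_r clean2))) ?_
    refine CtxEquiv.trans _ (GCtx.par (GCtx.comma (strip unr A) (strip unr C))
      (GCtx.par (parList (unrs unr C)) (parList (unrs unr A)))) _
      (CtxEquiv.symm _ _ (CtxEquiv.parAssoc _ _ _)) ?_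
    refine ceq_par_r ?_
    refine CtxEquiv.trans _ _ _ (CtxEquiv.parComm _ _) ?_
    exact CtxEquiv.symm _ _ (parList_append _ _)
  | par A C ihA ihC =>
    simp only [strip, unrs]
    refine CtxEquiv.trans _ _ _ (ceq_par ihA ihC) ?_
    refine CtxEquiv.trans _ _ _ (par_medial _ _ _ _) ?_
    exact ceq_par_r (CtxEquiv.symm _ _ (parList_append _ _))

lemma parList_perm {unr : B → Bool} {l₁ l₂ : List B} (h : l₁.Perm l₂) :
    CtxEquiv unr (parList l₁) (parList l₂) := by
  induction h with
  | nil => exact CtxEquiv.refl _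
  | cons x _ ih => exact ceq_par_r ih
  | swap x y l =>
    refine CtxEquiv.trans _ _ _ (CtxEquiv.parAssoc _ _ _) ?_
    refine CtxEquiv.trans _ _ _ (ceq_par_l (CtxEquiv.parComm _ _)) ?_
    exact CtxEquiv.symm _ _ (CtxEquiv.parAssoc _ _ _)
  | trans _ _ ih₁ ih₂ => exact CtxEquiv.trans _ _ _ ih₁ ih₂

lemma parList_absorb {unr : B → Bool} {b : B} (hb : unr b = true) :
    ∀ m : List B, b ∈ m →
    CtxEquiv unr (GCtx.par (GCtx.bind b) (parList m)) (parList m) := by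
  intro m
  induction m with
  | nil => intro h; simp at h
  | cons c m ih =>
    intro hmem
    by_cases hbc : b = c
    · subst hbc
      refine CtxEquiv.trans _ _ _ (CtxEquiv.parAssoc _ _ _) ?_
      exact ceq_par_l (CtxEquiv.unrDemote b hb)
    · have hm : b ∈ m := by
        rcases List.mem_cons.mp hmem with h | h
        · exact absurd h hbc
        · exact h
      refine CtxEquiv.trans _ _ _ (CtxEquiv.parAssoc _ _ _) ?_
      refine CtxEquiv.trans _ _ _ (ceq_par_l (CtxEquiv.parComm _ _)) ?_
      refine CtxEquiv.trans _ _ _ (CtxEquiv.symm _ _ (CtxEquiv.parAssoc _ _ _)) ?_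
      exact ceq_par_r (ih hm)

lemma parList_set_eq {unr : B → Bool} {l₁ l₂ : List B}
    (h₁ : ∀ b ∈ l₁, unr b = true) (h₂ : ∀ b ∈ l₂, unr b = true)
    (hset : {x | x ∈ l₁} = {x : B | x ∈ l₂}) :
    CtxEquiv unr (parList l₁) (parList l₂) := by
  classical
  have hmem : ∀ x : B, x ∈ l₁ ↔ x ∈ l₂ := by
    intro x
    exact Set.ext_iff.mp hset x
  have dedup_eq : ∀ l : List B, (∀ b ∈ l, unr b = true) →
      CtxEquiv unr (parList l) (parList l.dedup) := by
    intro l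
    induction l with
    | nil => intro _; exact CtxEquiv.refl _
    | cons c m ih =>
      intro hall
      by_cases hc : c ∈ m
      · rw [List.dedup_cons_of_mem hc]
        refine CtxEquiv.trans _ (GCtx.par (GCtx.bind c) (parList m.dedup)) _
          (ceq_par_r (ih (fun b hb => hall b (List.mem_cons_of_mem _ hb)))) ?_
        exact parList_absorb (hall c (List.mem_cons_self)) _
          (List.mem_dedup.mpr hc)
      · rw [List.dedup_cons_of_notMem hc]
        exact ceq_par_r (ih (fun b hb => hall b (List.mem_cons_of_mem _ hb)))
  have hperm : l₁.dedup.Perm l₂.dedup := by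
    refine (List.perm_ext_iff_of_nodup (List.nodup_dedup _) (List.nodup_dedup _)).mpr ?_
    intro a
    rw [List.mem_dedup, List.mem_dedup]
    exact hmem a
  refine CtxEquiv.trans _ _ _ (dedup_eq l₁ h₁) ?_
  refine CtxEquiv.trans _ _ _ (parList_perm hperm) ?_
  exact CtxEquiv.symm _ _ (dedup_eq l₂ h₂)

end Unrestricted

theorem ctx_equiv_iff_interp' {B : Type} [Inhabited B] (unr : B → Bool)
    (Γ₁ Γ₂ : GCtx B) :
    CtxEquiv unr Γ₁ Γ₂ ↔
      (Graph.Iso (GCtx.interpG unr Γ₁) (GCtx.interpG unr Γ₂) ∧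
        GCtx.unrSet unr Γ₁ = GCtx.unrSet unr Γ₂) := by
  constructor
  · exact equiv_sound unr
  · rintro ⟨hiso, hset⟩
    have d₁ := decompose unr Γ₁
    have d₂ := decompose unr Γ₂
    have L : CtxEquiv unr (parList (unrs unr Γ₁)) (parList (unrs unr Γ₂)) := by
      refine parList_set_eq (unrs_all unr Γ₁) (unrs_all unr Γ₂) ?_
      rw [← unrSet_eq, ← unrSet_eq]
      exact hset
    have hiso' : ((strip unr Γ₁).interpG unr).Iso ((strip unr Γ₂).interpG unr) := by
      rw [interp_strip, interp_strip]
      exact hiso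
    obtain ⟨Γ₁', hp₁', hceq₁, hef₁⟩ := exists_emptyFree unr (strip unr Γ₁) (strip_pure unr Γ₁)
    obtain ⟨Γ₂', hp₂', hceq₂, hef₂⟩ := exists_emptyFree unr (strip unr Γ₂) (strip_pure unr Γ₂)
    have iso'' : (Γ₁'.interpG unr).Iso (Γ₂'.interpG unr) :=
      Graph.iso_trans (Graph.iso_symm (equiv_sound unr hceq₁).1)
        (Graph.iso_trans hiso' (equiv_sound unr hceq₂).1)
    have main : CtxEquiv unr Γ₁' Γ₂' := by
      rcases hef₁ with rfl | hef₁
      · rcases hef₂ with rfl | hef₂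
        · exact CtxEquiv.refl _
        · exfalso
          have h0 := Graph.iso_n_eq iso''
          have := interp_n_pos unr Γ₂' hp₂' hef₂
          rw [show (GCtx.empty.interpG unr).n = 0 from rfl] at h0
          omega
      · rcases hef₂ with rfl | hef₂
        · exfalso
          have h0 := Graph.iso_n_eq iso''
          have := interp_n_pos unr Γ₁' hp₁' hef₁
          rw [show (GCtx.empty.interpG unr).n = 0 from rfl] at h0
          omega
        · exact pure_complete unr ((Γ₂'.interpG unr).n) Γ₁' Γ₂' hp₁' hp₂' hef₁ hef₂ rfl iso''
    refine CtxEquiv.trans _ _ _ d₁ ?_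
    refine CtxEquiv.trans _ _ _ (ceq_par_l hceq₁) ?_
    refine CtxEquiv.trans _ _ _ (ceq_par_l main) ?_
    refine CtxEquiv.trans _ _ _ (ceq_par_r L) ?_
    refine CtxEquiv.trans _ _ _ (ceq_par_l (CtxEquiv.symm _ _ hceq₂)) ?_
    exact CtxEquiv.symm _ _ d₂


/-- **Syntactic context equivalence coincides with semantic equivalence.**
`Γ₁ ≡ Γ₂` holds if and only if the graph parts of the interpretations are
isomorphic and the sets of unrestricted bindings are equal. -/
theorem ctx_equiv_iff_interp {B : Type} [Inhabited B] (unr : B → Bool)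
    (Γ₁ Γ₂ : GCtx B) :
    CtxEquiv unr Γ₁ Γ₂ ↔
      (Graph.Iso (GCtx.interpG unr Γ₁) (GCtx.interpG unr Γ₂) ∧
        GCtx.unrSet unr Γ₁ = GCtx.unrSet unr Γ₂) := by
  exact ctx_equiv_iff_interp' unr Γ₁ Γ₂

end LawOrder
end

section
/- Correctness of realization: for every typing context Γ containing no unrestricted bindings, the realization ⌜⟦Γ⟧⌝ of its graph interpretation is defined and ⌜⟦Γ⟧⌝ ≡ Γ. -/
set_option autoImplicit false
set_option linter.unusedVariables false

namespace LawOrder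

/-! ## Realization of a graph representation as a context (defined by
    recursion on the number of vertices, splitting at the minimum union cut
    or the minimum join cut). -/

open Classical in
noncomputable def Graph.realize {B : Type} (G : Graph B) : Option (GCtx B) :=
  if G.n = 0 then some GCtx.empty
  else if G.n = 1 then some (GCtx.bind (G.label 0))
  else if hu : ∃ k, G.UnionCut k then
    (Graph.realize (G.cutLo (sInf {k | G.UnionCut k}))).bind fun Γ₁ =>
      (Graph.realize (G.cutHi (sInf {k | G.UnionCut k}))).map fun Γ₂ =>
        GCtx.par Γ₁ Γ₂
  else if hj : ∃ k, G.JoinCut k then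
    (Graph.realize (G.cutLo (sInf {k | G.JoinCut k}))).bind fun Γ₁ =>
      (Graph.realize (G.cutHi (sInf {k | G.JoinCut k}))).map fun Γ₂ =>
        GCtx.comma Γ₁ Γ₂
  else none
termination_by G.n
decreasing_by
  · have h := Nat.sInf_mem (s := {k | G.UnionCut k}) hu
    simp only [Set.mem_setOf_eq] at h
    obtain ⟨h1, h2, -⟩ := h
    simpa only [Graph.cutLo] using h2
  · have h := Nat.sInf_mem (s := {k | G.UnionCut k}) hu
    simp only [Set.mem_setOf_eq] at h
    obtain ⟨h1, h2, -⟩ := h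
    simp only [Graph.cutHi]
    omega
  · have h := Nat.sInf_mem (s := {k | G.JoinCut k}) hj
    simp only [Set.mem_setOf_eq] at h
    obtain ⟨h1, h2, -⟩ := h
    simpa only [Graph.cutLo] using h2
  · have h := Nat.sInf_mem (s := {k | G.JoinCut k}) hj
    simp only [Set.mem_setOf_eq] at h
    obtain ⟨h1, h2, -⟩ := h
    simp only [Graph.cutHi]
    omega

namespace Graph
variable {B : Type}

def GEq (G₁ G₂ : Graph B) : Prop :=
  G₁.n = G₂.n ∧ (∀ i, i < G₁.n → G₁.label i = G₂.label i) ∧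
    ∀ i j, G₁.edge i j ↔ G₂.edge i j

lemma GEq.rfl {G : Graph B} : GEq G G := ⟨Eq.refl _, fun _ _ => Eq.refl _, fun _ _ => Iff.rfl⟩

lemma GEq.symm {G G' : Graph B} (h : GEq G G') : GEq G' G := by
  obtain ⟨h1, h2, h3⟩ := h
  exact ⟨h1.symm, fun i hi => (h2 i (h1 ▸ hi)).symm, fun i j => (h3 i j).symm⟩

lemma GEq.trans {G₁ G₂ G₃ : Graph B} (h : GEq G₁ G₂) (h' : GEq G₂ G₃) : GEq G₁ G₃ := by
  obtain ⟨h1, h2, h3⟩ := h; obtain ⟨h1', h2', h3'⟩ := h'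
  exact ⟨h1.trans h1', fun i hi => (h2 i hi).trans (h2' i (h1 ▸ hi)),
    fun i j => (h3 i j).trans (h3' i j)⟩

lemma unionCut_congr {G G' : Graph B} (h : GEq G G') {k : ℕ} :
    G.UnionCut k ↔ G'.UnionCut k := by
  obtain ⟨h1, -, h3⟩ := h
  unfold UnionCut
  rw [h1]
  constructor <;> rintro ⟨a, b, c⟩ <;> refine ⟨a, b, fun i j hi hj => ?_⟩
  · rw [← h3]; exact c i j hi hj
  · rw [h3]; exact c i j hi hj

lemma joinCut_congr {G G' : Graph B} (h : GEq G G') {k : ℕ} :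
    G.JoinCut k ↔ G'.JoinCut k := by
  obtain ⟨h1, -, h3⟩ := h
  unfold JoinCut
  rw [h1]
  constructor <;> rintro ⟨a, b, c⟩ <;> refine ⟨a, b, fun i j hi hj hj' => ?_⟩
  · rw [← h3]; exact c i j hi hj hj'
  · rw [h3]; exact c i j hi hj hj'

lemma cutLo_congr {G G' : Graph B} (h : GEq G G') {k : ℕ} (hk : k ≤ G.n) :
    GEq (G.cutLo k) (G'.cutLo k) := by
  obtain ⟨h1, h2, h3⟩ := h
  refine ⟨rfl, fun i hi => ?_, fun i j => ?_⟩
  · simp only [cutLo] at hi ⊢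
    exact h2 i (by omega)
  · simp only [cutLo]
    rw [h3]

lemma cutHi_congr {G G' : Graph B} (h : GEq G G') {k : ℕ} :
    GEq (G.cutHi k) (G'.cutHi k) := by
  obtain ⟨h1, h2, h3⟩ := h
  refine ⟨by simp [cutHi, h1], fun i hi => ?_, fun i j => ?_⟩
  · simp only [cutHi] at hi ⊢
    exact h2 _ (by omega)
  · simp only [cutHi]
    rw [h3]

lemma union_congr_s11 {G₁ G₁' G₂ G₂' : Graph B} (h₁ : GEq G₁ G₁') (h₂ : GEq G₂ G₂') :
    GEq (G₁.union G₂) (G₁'.union G₂') := by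
  obtain ⟨a1, a2, a3⟩ := h₁; obtain ⟨b1, b2, b3⟩ := h₂
  refine ⟨by simp [union, a1, b1], fun i hi => ?_, fun i j => ?_⟩
  · simp only [union] at hi ⊢
    rw [a1]
    split
    · exact a2 i (by omega)
    · exact b2 _ (by omega)
  · simp only [union]
    rw [a1, a3, b3]

lemma join_congr_s11 {G₁ G₁' G₂ G₂' : Graph B} (h₁ : GEq G₁ G₁') (h₂ : GEq G₂ G₂') :
    GEq (G₁.join G₂) (G₁'.join G₂') := by
  obtain ⟨a1, a2, a3⟩ := h₁; obtain ⟨b1, b2, b3⟩ := h₂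
  refine ⟨by simp [join, a1, b1], fun i hi => ?_, fun i j => ?_⟩
  · simp only [join] at hi ⊢
    rw [a1]
    split
    · exact a2 i (by omega)
    · exact b2 _ (by omega)
  · simp only [join]
    rw [a1, b1, a3, b3]

lemma join_zero_left {G₁ G₂ : Graph B} (h : G₁.n = 0) : GEq (G₁.join G₂) G₂ := by
  refine ⟨by simp [join, h], fun i hi => ?_, fun i j => ?_⟩
  · simp only [join, h]
    simp
  · simp only [join, h]
    constructor
    · rintro (he | ⟨-, -, he⟩ | ⟨hi, -, -⟩)
      · exact absurd (G₁.edge_lt _ _ he).1 (by omega)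
      · simpa using he
      · omega
    · intro he
      exact Or.inr (Or.inl ⟨Nat.zero_le _, Nat.zero_le _, by simpa using he⟩)

lemma join_zero_right {G₁ G₂ : Graph B} (h : G₂.n = 0) : GEq (G₁.join G₂) G₁ := by
  refine ⟨by simp [join, h], fun i hi => ?_, fun i j => ?_⟩
  · simp only [join, h] at hi ⊢
    rw [if_pos (by omega)]
  · simp only [join, h]
    constructor
    · rintro (he | ⟨-, -, he⟩ | ⟨c1, c2, c3⟩)
      · exact he
      · exact absurd (G₂.edge_lt _ _ he).1 (by omega)
      · omega
    · exact Or.inl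

lemma union_zero_left {G₁ G₂ : Graph B} (h : G₁.n = 0) : GEq (G₁.union G₂) G₂ := by
  refine ⟨by simp [union, h], fun i hi => ?_, fun i j => ?_⟩
  · simp only [union, h]
    simp
  · simp only [union, h]
    constructor
    · rintro (he | ⟨-, -, he⟩)
      · exact absurd (G₁.edge_lt _ _ he).1 (by omega)
      · simpa using he
    · intro he
      exact Or.inr ⟨Nat.zero_le _, Nat.zero_le _, by simpa using he⟩

lemma union_zero_right {G₁ G₂ : Graph B} (h : G₂.n = 0) : GEq (G₁.union G₂) G₁ := by
  refine ⟨by simp [union, h], fun i hi => ?_, fun i j => ?_⟩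
  · simp only [union, h] at hi ⊢
    rw [if_pos (by omega)]
  · simp only [union, h]
    constructor
    · rintro (he | ⟨-, -, he⟩)
      · exact he
      · exact absurd (G₂.edge_lt _ _ he).1 (by omega)
    · exact Or.inl

end Graph
namespace Graph
variable {B : Type}

lemma cutLo_join_left {G₁ G₂ : Graph B} {k : ℕ} (hk : k ≤ G₁.n) :
    GEq ((G₁.join G₂).cutLo k) (G₁.cutLo k) := by
  refine ⟨rfl, fun i hi => ?_, fun i j => ?_⟩
  · simp only [cutLo, join] at hi ⊢
    rw [if_pos (by omega)]
  · simp only [cutLo, join]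
    constructor
    · rintro ⟨he | ⟨c1, c2, c3⟩ | ⟨c1, c2, c3⟩, hik, hjk⟩
      · exact ⟨he, hik, hjk⟩
      · omega
      · omega
    · rintro ⟨he, hik, hjk⟩
      exact ⟨Or.inl he, hik, hjk⟩

lemma cutLo_union_left {G₁ G₂ : Graph B} {k : ℕ} (hk : k ≤ G₁.n) :
    GEq ((G₁.union G₂).cutLo k) (G₁.cutLo k) := by
  refine ⟨rfl, fun i hi => ?_, fun i j => ?_⟩
  · simp only [cutLo, union] at hi ⊢
    rw [if_pos (by omega)]
  · simp only [cutLo, union]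
    constructor
    · rintro ⟨he | ⟨c1, c2, c3⟩, hik, hjk⟩
      · exact ⟨he, hik, hjk⟩
      · omega
    · rintro ⟨he, hik, hjk⟩
      exact ⟨Or.inl he, hik, hjk⟩

lemma cutHi_join_left {G₁ G₂ : Graph B} {k : ℕ} (hk : k ≤ G₁.n) :
    GEq ((G₁.join G₂).cutHi k) ((G₁.cutHi k).join G₂) := by
  refine ⟨by simp only [cutHi, join]; omega, fun i hi => ?_, fun i j => ?_⟩
  · simp only [cutHi, join] at hi ⊢
    by_cases hc : i + k < G₁.n
    · rw [if_pos hc]; exact (if_pos (show i < G₁.n - k by omega)).symm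
    · rw [if_neg hc]; refine Eq.trans ?_ (if_neg (show ¬ i < G₁.n - k by omega)).symm
      congr 1
      omega
  · simp only [cutHi, join]
    constructor
    · rintro (he | ⟨c1, c2, c3⟩ | ⟨c1, c2, c3⟩)
      · exact Or.inl he
      · refine Or.inr (Or.inl ⟨by omega, by omega, ?_⟩)
        have e1 : i - (G₁.n - k) = i + k - G₁.n := by omega
        have e2 : j - (G₁.n - k) = j + k - G₁.n := by omega
        rw [e1, e2]; exact c3
      · exact Or.inr (Or.inr ⟨by omega, by omega, by omega⟩)
    · rintro (he | ⟨c1, c2, c3⟩ | ⟨c1, c2, c3⟩)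
      · exact Or.inl he
      · refine Or.inr (Or.inl ⟨by omega, by omega, ?_⟩)
        have e1 : i - (G₁.n - k) = i + k - G₁.n := by omega
        have e2 : j - (G₁.n - k) = j + k - G₁.n := by omega
        rw [← e1, ← e2]; exact c3
      · exact Or.inr (Or.inr ⟨by omega, by omega, by omega⟩)

lemma cutHi_union_left {G₁ G₂ : Graph B} {k : ℕ} (hk : k ≤ G₁.n) :
    GEq ((G₁.union G₂).cutHi k) ((G₁.cutHi k).union G₂) := by
  refine ⟨by simp only [cutHi, union]; omega, fun i hi => ?_, fun i j => ?_⟩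
  · simp only [cutHi, union] at hi ⊢
    by_cases hc : i + k < G₁.n
    · rw [if_pos hc]; exact (if_pos (show i < G₁.n - k by omega)).symm
    · rw [if_neg hc]; refine Eq.trans ?_ (if_neg (show ¬ i < G₁.n - k by omega)).symm
      congr 1
      omega
  · simp only [cutHi, union]
    constructor
    · rintro (he | ⟨c1, c2, c3⟩)
      · exact Or.inl he
      · refine Or.inr ⟨by omega, by omega, ?_⟩
        have e1 : i - (G₁.n - k) = i + k - G₁.n := by omega
        have e2 : j - (G₁.n - k) = j + k - G₁.n := by omega
        rw [e1, e2]; exact c3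
    · rintro (he | ⟨c1, c2, c3⟩)
      · exact Or.inl he
      · refine Or.inr ⟨by omega, by omega, ?_⟩
        have e1 : i - (G₁.n - k) = i + k - G₁.n := by omega
        have e2 : j - (G₁.n - k) = j + k - G₁.n := by omega
        rw [← e1, ← e2]; exact c3

lemma cutLo_join_right {G₁ G₂ : Graph B} {k : ℕ} (h1 : G₁.n ≤ k)
    (h2 : k ≤ G₁.n + G₂.n) : GEq ((G₁.join G₂).cutLo k) (G₁.join (G₂.cutLo (k - G₁.n))) := by
  refine ⟨by simp only [cutLo, join]; omega, fun i hi => ?_, fun i j => ?_⟩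
  · simp only [cutLo, join] at hi ⊢
  · simp only [cutLo, join]
    constructor
    · rintro ⟨he | ⟨c1, c2, c3⟩ | ⟨c1, c2, c3⟩, hik, hjk⟩
      · exact Or.inl he
      · exact Or.inr (Or.inl ⟨c1, c2, c3, by omega, by omega⟩)
      · exact Or.inr (Or.inr ⟨c1, c2, by omega⟩)
    · rintro (he | ⟨c1, c2, c3, c4, c5⟩ | ⟨c1, c2, c3⟩)
      · have := G₁.edge_lt _ _ he
        exact ⟨Or.inl he, by omega, by omega⟩
      · exact ⟨Or.inr (Or.inl ⟨c1, c2, c3⟩), by omega, by omega⟩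
      · exact ⟨Or.inr (Or.inr ⟨c1, c2, by omega⟩), by omega, by omega⟩

lemma cutLo_union_right {G₁ G₂ : Graph B} {k : ℕ} (h1 : G₁.n ≤ k)
    (h2 : k ≤ G₁.n + G₂.n) : GEq ((G₁.union G₂).cutLo k) (G₁.union (G₂.cutLo (k - G₁.n))) := by
  refine ⟨by simp only [cutLo, union]; omega, fun i hi => ?_, fun i j => ?_⟩
  · simp only [cutLo, union] at hi ⊢
  · simp only [cutLo, union]
    constructor
    · rintro ⟨he | ⟨c1, c2, c3⟩, hik, hjk⟩
      · exact Or.inl he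
      · exact Or.inr ⟨c1, c2, c3, by omega, by omega⟩
    · rintro (he | ⟨c1, c2, c3, c4, c5⟩)
      · have := G₁.edge_lt _ _ he
        exact ⟨Or.inl he, by omega, by omega⟩
      · exact ⟨Or.inr ⟨c1, c2, c3⟩, by omega, by omega⟩

lemma cutHi_join_right {G₁ G₂ : Graph B} {k : ℕ} (h1 : G₁.n ≤ k) :
    GEq ((G₁.join G₂).cutHi k) (G₂.cutHi (k - G₁.n)) := by
  refine ⟨by simp only [cutHi, join]; omega, fun i hi => ?_, fun i j => ?_⟩
  · simp only [cutHi, join] at hi ⊢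
    rw [if_neg (by omega)]
    congr 1
    omega
  · simp only [cutHi, join]
    constructor
    · rintro (he | ⟨c1, c2, c3⟩ | ⟨c1, c2, c3⟩)
      · have := G₁.edge_lt _ _ he
        omega
      · have e1 : i + k - G₁.n = i + (k - G₁.n) := by omega
        have e2 : j + k - G₁.n = j + (k - G₁.n) := by omega
        rw [e1, e2] at c3; exact c3
      · omega
    · intro he
      refine Or.inr (Or.inl ⟨by omega, by omega, ?_⟩)
      have e1 : i + k - G₁.n = i + (k - G₁.n) := by omega
      have e2 : j + k - G₁.n = j + (k - G₁.n) := by omega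
      rw [e1, e2]; exact he

lemma cutHi_union_right {G₁ G₂ : Graph B} {k : ℕ} (h1 : G₁.n ≤ k) :
    GEq ((G₁.union G₂).cutHi k) (G₂.cutHi (k - G₁.n)) := by
  refine ⟨by simp only [cutHi, union]; omega, fun i hi => ?_, fun i j => ?_⟩
  · simp only [cutHi, union] at hi ⊢
    rw [if_neg (by omega)]
    congr 1
    omega
  · simp only [cutHi, union]
    constructor
    · rintro (he | ⟨c1, c2, c3⟩)
      · have := G₁.edge_lt _ _ he
        omega
      · have e1 : i + k - G₁.n = i + (k - G₁.n) := by omega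
        have e2 : j + k - G₁.n = j + (k - G₁.n) := by omega
        rw [e1, e2] at c3; exact c3
    · intro he
      refine Or.inr ⟨by omega, by omega, ?_⟩
      have e1 : i + k - G₁.n = i + (k - G₁.n) := by omega
      have e2 : j + k - G₁.n = j + (k - G₁.n) := by omega
      rw [e1, e2]; exact he

lemma unionCut_union_left {G₁ G₂ : Graph B} {k : ℕ} (h : (G₁.union G₂).UnionCut k)
    (hk : k < G₁.n) : G₁.UnionCut k := by
  obtain ⟨a, b, c⟩ := h
  exact ⟨a, hk, fun i j hi hj he => c i j hi hj (Or.inl he)⟩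

lemma joinCut_join_left {G₁ G₂ : Graph B} {k : ℕ} (h : (G₁.join G₂).JoinCut k)
    (hk : k < G₁.n) : G₁.JoinCut k := by
  obtain ⟨a, b, c⟩ := h
  refine ⟨a, hk, fun i j hi hj hj' => ?_⟩
  have := c i j hi hj (by simp only [join]; omega)
  simp only [join] at this
  rcases this with he | ⟨c1, c2, c3⟩ | ⟨c1, c2, c3⟩
  · exact he
  · omega
  · omega

lemma unionCut_union_right {G₁ G₂ : Graph B} {k : ℕ} (h : (G₁.union G₂).UnionCut k)
    (hk : G₁.n < k) : G₂.UnionCut (k - G₁.n) := by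
  obtain ⟨a, b, c⟩ := h
  simp only [union] at b
  refine ⟨by omega, by omega, fun i j hi hj he => ?_⟩
  refine c (i + G₁.n) (j + G₁.n) (by omega) (by omega) ?_
  simp only [union]
  refine Or.inr ⟨by omega, by omega, ?_⟩
  simpa using he

lemma joinCut_join_right {G₁ G₂ : Graph B} {k : ℕ} (h : (G₁.join G₂).JoinCut k)
    (hk : G₁.n < k) : G₂.JoinCut (k - G₁.n) := by
  obtain ⟨a, b, c⟩ := h
  simp only [join] at b
  refine ⟨by omega, by omega, fun i j hi hj hj' => ?_⟩
  have := c (i + G₁.n) (j + G₁.n) (by omega) (by omega) (by simp only [join]; omega)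
  simp only [join] at this
  rcases this with he | ⟨c1, c2, c3⟩ | ⟨c1, c2, c3⟩
  · have := G₁.edge_lt _ _ he
    omega
  · simpa using c3
  · omega

lemma unionCut_join {G₁ G₂ : Graph B} {k : ℕ} (h : (G₁.join G₂).UnionCut k) :
    G₁.n = 0 ∨ G₂.n = 0 := by
  obtain ⟨a, b, c⟩ := h
  simp only [join] at b
  by_contra hcon
  push_neg at hcon
  obtain ⟨h1, h2⟩ := hcon
  by_cases hc : k ≤ G₁.n
  · exact c (k - 1) G₁.n (by omega) (by omega)
      (by simp only [join]; exact Or.inr (Or.inr ⟨by omega, by omega, by omega⟩))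
  · exact c 0 k (by omega) (by omega)
      (by simp only [join]; exact Or.inr (Or.inr ⟨by omega, by omega, by omega⟩))

lemma joinCut_union {G₁ G₂ : Graph B} {k : ℕ} (h : (G₁.union G₂).JoinCut k) :
    G₁.n = 0 ∨ G₂.n = 0 := by
  obtain ⟨a, b, c⟩ := h
  simp only [union] at b
  by_contra hcon
  push_neg at hcon
  obtain ⟨h1, h2⟩ := hcon
  by_cases hc : k ≤ G₁.n
  · have := c (k - 1) (G₁.n + G₂.n - 1) (by omega) (by omega) (by simp only [union]; omega)
    simp only [union] at this
    rcases this with he | ⟨c1, c2, c3⟩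
    · have := G₁.edge_lt _ _ he
      omega
    · have := G₂.edge_lt _ _ c3
      omega
  · have := c 0 k (by omega) (by omega) (by simp only [union]; omega)
    simp only [union] at this
    rcases this with he | ⟨c1, c2, c3⟩
    · have := G₁.edge_lt _ _ he
      omega
    · omega

end Graph

namespace Graph
variable {B : Type}

lemma cutLo_self {G : Graph B} : GEq (G.cutLo G.n) G := by
  refine ⟨rfl, fun i hi => rfl, fun i j => ?_⟩
  simp only [cutLo]
  constructor
  · rintro ⟨he, -, -⟩; exact he
  · intro he
    have := G.edge_lt _ _ he
    exact ⟨he, this.1, this.2⟩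

lemma cutHi_zero {G : Graph B} : GEq (G.cutHi 0) G := by
  refine ⟨by simp [cutHi], fun i hi => by simp [cutHi], fun i j => by simp [cutHi]⟩

end Graph
namespace GCtx
set_option linter.unusedSectionVars false
variable {B : Type} [Inhabited B] {unr : B → Bool}

lemma interp_n (Γ : GCtx B) (hord : ∀ b ∈ Γ.toList, unr b = false) :
    (Γ.interpG unr).n = Γ.toList.length := by
  induction Γ with
  | empty => rfl
  | bind b =>
    have : unr b = false := hord b (by simp [toList])
    simp [interpG, this, toList, Graph.zero]
  | comma Γ₁ Γ₂ ih₁ ih₂ =>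
    simp only [toList, List.mem_append] at hord
    simp only [interpG, Graph.join, toList, List.length_append]
    rw [ih₁ (fun b hb => hord b (Or.inl hb)), ih₂ (fun b hb => hord b (Or.inr hb))]
  | par Γ₁ Γ₂ ih₁ ih₂ =>
    simp only [toList, List.mem_append] at hord
    simp only [interpG, Graph.union, toList, List.length_append]
    rw [ih₁ (fun b hb => hord b (Or.inl hb)), ih₂ (fun b hb => hord b (Or.inr hb))]

lemma interp_label (Γ : GCtx B) (hord : ∀ b ∈ Γ.toList, unr b = false)
    (i : ℕ) (hi : i < (Γ.interpG unr).n) :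
    (Γ.interpG unr).label i = Γ.toList.getD i default := by
  induction Γ generalizing i with
  | empty => simp [interpG, Graph.zero] at hi
  | bind b =>
    have hb : unr b = false := hord b (by simp [toList])
    simp only [interpG, hb] at hi ⊢
    simp only [Bool.false_eq_true, if_false] at hi ⊢
    interval_cases i
    · simp [toList]
  | comma Γ₁ Γ₂ ih₁ ih₂ =>
    simp only [toList, List.mem_append] at hord
    have h₁ := fun b hb => hord b (Or.inl hb)
    have h₂ := fun b hb => hord b (Or.inr hb)
    have hn₁ := interp_n Γ₁ h₁
    simp only [interpG, Graph.join] at hi ⊢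
    simp only [toList]
    by_cases hc : i < (Γ₁.interpG unr).n
    · rw [if_pos hc, ih₁ h₁ i hc, List.getD_append _ _ _ _ (by omega)]
    · rw [if_neg hc, ih₂ h₂ _ (by omega), List.getD_append_right _ _ _ _ (by omega)]
      congr 1
      omega
  | par Γ₁ Γ₂ ih₁ ih₂ =>
    simp only [toList, List.mem_append] at hord
    have h₁ := fun b hb => hord b (Or.inl hb)
    have h₂ := fun b hb => hord b (Or.inr hb)
    have hn₁ := interp_n Γ₁ h₁
    simp only [interpG, Graph.union] at hi ⊢
    simp only [toList]
    by_cases hc : i < (Γ₁.interpG unr).n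
    · rw [if_pos hc, ih₁ h₁ i hc, List.getD_append _ _ _ _ (by omega)]
    · rw [if_neg hc, ih₂ h₂ _ (by omega), List.getD_append_right _ _ _ _ (by omega)]
      congr 1
      omega

lemma equiv_comma_congr {Γ₁ Γ₂ Δ₁ Δ₂ : GCtx B} (h₁ : CtxEquiv unr Γ₁ Δ₁)
    (h₂ : CtxEquiv unr Γ₂ Δ₂) : CtxEquiv unr (comma Γ₁ Γ₂) (comma Δ₁ Δ₂) := by
  refine CtxEquiv.trans _ (comma Δ₁ Γ₂) _ ?_ ?_
  · exact CtxEquiv.congr (GPat.commaL GPat.hole Γ₂) _ _ h₁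
  · exact CtxEquiv.congr (GPat.commaR Δ₁ GPat.hole) _ _ h₂

lemma equiv_par_congr {Γ₁ Γ₂ Δ₁ Δ₂ : GCtx B} (h₁ : CtxEquiv unr Γ₁ Δ₁)
    (h₂ : CtxEquiv unr Γ₂ Δ₂) : CtxEquiv unr (par Γ₁ Γ₂) (par Δ₁ Δ₂) := by
  refine CtxEquiv.trans _ (par Δ₁ Γ₂) _ ?_ ?_
  · exact CtxEquiv.congr (GPat.parL GPat.hole Γ₂) _ _ h₁
  · exact CtxEquiv.congr (GPat.parR Δ₁ GPat.hole) _ _ h₂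

lemma equiv_empty {Γ : GCtx B} (h : Γ.toList = []) : CtxEquiv unr GCtx.empty Γ := by
  induction Γ with
  | empty => exact CtxEquiv.refl _
  | bind b => simp [toList] at h
  | comma Γ₁ Γ₂ ih₁ ih₂ =>
    simp only [toList, List.append_eq_nil_iff] at h
    refine CtxEquiv.trans _ (comma GCtx.empty GCtx.empty) _ ?_ ?_
    · exact CtxEquiv.symm _ _ (CtxEquiv.commaIdL _)
    · exact equiv_comma_congr (ih₁ h.1) (ih₂ h.2)
  | par Γ₁ Γ₂ ih₁ ih₂ =>
    simp only [toList, List.append_eq_nil_iff] at h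
    refine CtxEquiv.trans _ (par GCtx.empty GCtx.empty) _ ?_ ?_
    · exact CtxEquiv.symm _ _ (CtxEquiv.parId _)
    · exact equiv_par_congr (ih₁ h.1) (ih₂ h.2)

lemma equiv_parIdR (Γ : GCtx B) : CtxEquiv unr (par Γ GCtx.empty) Γ := by
  refine CtxEquiv.trans _ (par GCtx.empty Γ) _ (CtxEquiv.parComm _ _) (CtxEquiv.parId _)

lemma equiv_single {Γ : GCtx B} {b : B} (h : Γ.toList = [b]) :
    CtxEquiv unr (GCtx.bind b) Γ := by
  induction Γ with
  | empty => simp [toList] at h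
  | bind b' => simp only [toList, List.cons.injEq] at h; rw [h.1]; exact CtxEquiv.refl _
  | comma Γ₁ Γ₂ ih₁ ih₂ =>
    simp only [toList] at h
    rcases List.append_eq_cons_iff.mp h with ⟨h1, h2⟩ | ⟨l, h1, h2⟩
    · refine CtxEquiv.trans _ (comma GCtx.empty Γ₂) _ ?_ ?_
      · exact CtxEquiv.trans _ Γ₂ _ (ih₂ h2) (CtxEquiv.symm _ _ (CtxEquiv.commaIdL _))
      · exact equiv_comma_congr (equiv_empty h1) (CtxEquiv.refl _)
    · have h2' : Γ₂.toList = [] := by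
        have hl := congrArg List.length h
        rw [List.length_append, h1] at hl
        simp at hl
        exact List.eq_nil_of_length_eq_zero (by omega)
      rw [h2'] at h
      simp at h
      refine CtxEquiv.trans _ (comma Γ₁ GCtx.empty) _ ?_ ?_
      · exact CtxEquiv.trans _ Γ₁ _ (ih₁ h) (CtxEquiv.symm _ _ (CtxEquiv.commaIdR _))
      · exact equiv_comma_congr (CtxEquiv.refl _) (equiv_empty h2')
  | par Γ₁ Γ₂ ih₁ ih₂ =>
    simp only [toList] at h
    rcases List.append_eq_cons_iff.mp h with ⟨h1, h2⟩ | ⟨l, h1, h2⟩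
    · refine CtxEquiv.trans _ (par GCtx.empty Γ₂) _ ?_ ?_
      · exact CtxEquiv.trans _ Γ₂ _ (ih₂ h2) (CtxEquiv.symm _ _ (CtxEquiv.parId _))
      · exact equiv_par_congr (equiv_empty h1) (CtxEquiv.refl _)
    · have h2' : Γ₂.toList = [] := by
        have hl := congrArg List.length h
        rw [List.length_append, h1] at hl
        simp at hl
        exact List.eq_nil_of_length_eq_zero (by omega)
      rw [h2'] at h
      simp at h
      refine CtxEquiv.trans _ (par Γ₁ GCtx.empty) _ ?_ ?_
      · exact CtxEquiv.trans _ Γ₁ _ (ih₁ h) (CtxEquiv.symm _ _ (equiv_parIdR _))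
      · exact equiv_par_congr (CtxEquiv.refl _) (equiv_empty h2')

end GCtx
namespace GCtx
set_option linter.unusedSectionVars false
variable {B : Type} [Inhabited B] {unr : B → Bool}

open Graph in
lemma cut_exists (Γ : GCtx B) (hord : ∀ b ∈ Γ.toList, unr b = false)
    (h2 : 2 ≤ (Γ.interpG unr).n) :
    (∃ k, (Γ.interpG unr).UnionCut k) ∨ ∃ k, (Γ.interpG unr).JoinCut k := by
  induction Γ with
  | empty => simp [interpG, Graph.zero] at h2
  | bind b =>
    have hb : unr b = false := hord b (by simp [toList])
    simp [interpG, hb] at h2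
  | comma Γ₁ Γ₂ ih₁ ih₂ =>
    simp only [toList, List.mem_append] at hord
    have h₁ := fun b hb => hord b (Or.inl hb)
    have h₂ := fun b hb => hord b (Or.inr hb)
    simp only [interpG] at h2 ⊢
    have hn : ((Γ₁.interpG unr).join (Γ₂.interpG unr)).n
        = (Γ₁.interpG unr).n + (Γ₂.interpG unr).n := rfl
    by_cases hz₁ : (Γ₁.interpG unr).n = 0
    · have hG := join_zero_left (G₂ := Γ₂.interpG unr) hz₁
      rcases ih₂ h₂ (by omega) with ⟨k, hk⟩ | ⟨k, hk⟩
      · exact Or.inl ⟨k, (unionCut_congr hG).mpr hk⟩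
      · exact Or.inr ⟨k, (joinCut_congr hG).mpr hk⟩
    · by_cases hz₂ : (Γ₂.interpG unr).n = 0
      · have hG := join_zero_right (G₁ := Γ₁.interpG unr) hz₂
        rcases ih₁ h₁ (by omega) with ⟨k, hk⟩ | ⟨k, hk⟩
        · exact Or.inl ⟨k, (unionCut_congr hG).mpr hk⟩
        · exact Or.inr ⟨k, (joinCut_congr hG).mpr hk⟩
      · refine Or.inr ⟨(Γ₁.interpG unr).n, by omega, by omega, fun i j hi hj hj' => ?_⟩
        simp only [Graph.join] at hj' ⊢
        exact Or.inr (Or.inr ⟨hi, hj, hj'⟩)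
  | par Γ₁ Γ₂ ih₁ ih₂ =>
    simp only [toList, List.mem_append] at hord
    have h₁ := fun b hb => hord b (Or.inl hb)
    have h₂ := fun b hb => hord b (Or.inr hb)
    simp only [interpG] at h2 ⊢
    have hn : ((Γ₁.interpG unr).union (Γ₂.interpG unr)).n
        = (Γ₁.interpG unr).n + (Γ₂.interpG unr).n := rfl
    by_cases hz₁ : (Γ₁.interpG unr).n = 0
    · have hG := union_zero_left (G₂ := Γ₂.interpG unr) hz₁
      rcases ih₂ h₂ (by omega) with ⟨k, hk⟩ | ⟨k, hk⟩
      · exact Or.inl ⟨k, (unionCut_congr hG).mpr hk⟩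
      · exact Or.inr ⟨k, (joinCut_congr hG).mpr hk⟩
    · by_cases hz₂ : (Γ₂.interpG unr).n = 0
      · have hG := union_zero_right (G₁ := Γ₁.interpG unr) hz₂
        rcases ih₁ h₁ (by omega) with ⟨k, hk⟩ | ⟨k, hk⟩
        · exact Or.inl ⟨k, (unionCut_congr hG).mpr hk⟩
        · exact Or.inr ⟨k, (joinCut_congr hG).mpr hk⟩
      · refine Or.inl ⟨(Γ₁.interpG unr).n, by omega, by omega, fun i j hi hj he => ?_⟩
        simp only [Graph.union] at he
        rcases he with he | ⟨c1, c2, c3⟩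
        · exact absurd (Graph.edge_lt _ _ _ he).2 (by omega)
        · omega

open Graph in
lemma cut_union_decomp (Γ : GCtx B) :
    (∀ b ∈ Γ.toList, unr b = false) → ∀ k, (Γ.interpG unr).UnionCut k →
    ∃ Γ₁ Γ₂ : GCtx B, CtxEquiv unr Γ (par Γ₁ Γ₂) ∧
      (∀ b ∈ Γ₁.toList, unr b = false) ∧ (∀ b ∈ Γ₂.toList, unr b = false) ∧
      GEq ((Γ.interpG unr).cutLo k) (Γ₁.interpG unr) ∧
      GEq ((Γ.interpG unr).cutHi k) (Γ₂.interpG unr) := by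
  induction Γ with
  | empty =>
    intro hord k hcut
    have h0 : (interpG unr GCtx.empty).n = 0 := rfl
    have := hcut.2.1
    omega
  | bind b =>
    intro hord k hcut
    have hb : unr b = false := hord b (by simp [toList])
    have h1 : (interpG unr (GCtx.bind b)).n = 1 := by simp [interpG, hb]
    have := hcut.1
    have := hcut.2.1
    omega
  | comma Γ₁ Γ₂ ih₁ ih₂ =>
    intro hord k hcut
    simp only [toList, List.mem_append] at hord
    have h₁ := fun b hb => hord b (Or.inl hb)
    have h₂ := fun b hb => hord b (Or.inr hb)
    simp only [interpG] at hcut ⊢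
    have hkn := hcut.2.1
    rcases unionCut_join hcut with hz | hz
    · have hnil : Γ₁.toList = [] :=
        List.eq_nil_of_length_eq_zero (by rw [← interp_n Γ₁ h₁]; exact hz)
      have hG := join_zero_left (G₂ := Γ₂.interpG unr) hz
      obtain ⟨A, C, hequiv, hA, hC, hlo, hhi⟩ := ih₂ h₂ k ((unionCut_congr hG).mp hcut)
      refine ⟨A, C, ?_, hA, hC, ?_, ?_⟩
      · refine CtxEquiv.trans _ Γ₂ _ ?_ hequiv
        refine CtxEquiv.trans _ (comma GCtx.empty Γ₂) _ ?_ (CtxEquiv.commaIdL _)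
        exact equiv_comma_congr (CtxEquiv.symm _ _ (equiv_empty hnil)) (CtxEquiv.refl _)
      · exact (cutLo_congr hG (le_of_lt hkn)).trans hlo
      · exact (cutHi_congr hG).trans hhi
    · have hnil : Γ₂.toList = [] :=
        List.eq_nil_of_length_eq_zero (by rw [← interp_n Γ₂ h₂]; exact hz)
      have hG := join_zero_right (G₁ := Γ₁.interpG unr) hz
      obtain ⟨A, C, hequiv, hA, hC, hlo, hhi⟩ := ih₁ h₁ k ((unionCut_congr hG).mp hcut)
      refine ⟨A, C, ?_, hA, hC, ?_, ?_⟩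
      · refine CtxEquiv.trans _ Γ₁ _ ?_ hequiv
        refine CtxEquiv.trans _ (comma Γ₁ GCtx.empty) _ ?_ (CtxEquiv.commaIdR _)
        exact equiv_comma_congr (CtxEquiv.refl _) (CtxEquiv.symm _ _ (equiv_empty hnil))
      · exact (cutLo_congr hG (le_of_lt hkn)).trans hlo
      · exact (cutHi_congr hG).trans hhi
  | par Γ₁ Γ₂ ih₁ ih₂ =>
    intro hord k hcut
    simp only [toList, List.mem_append] at hord
    have h₁ := fun b hb => hord b (Or.inl hb)
    have h₂ := fun b hb => hord b (Or.inr hb)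
    simp only [interpG] at hcut ⊢
    have hkn := hcut.2.1
    have hn : ((Γ₁.interpG unr).union (Γ₂.interpG unr)).n
        = (Γ₁.interpG unr).n + (Γ₂.interpG unr).n := rfl
    rcases Nat.lt_trichotomy k (Γ₁.interpG unr).n with hlt | heq | hgt
    · obtain ⟨A, C, hequiv, hA, hC, hlo, hhi⟩ := ih₁ h₁ k (unionCut_union_left hcut hlt)
      refine ⟨A, par C Γ₂, ?_, hA, ?_, ?_, ?_⟩
      · refine CtxEquiv.trans _ (par (par A C) Γ₂) _ ?_
          (CtxEquiv.symm _ _ (CtxEquiv.parAssoc _ _ _))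
        exact equiv_par_congr hequiv (CtxEquiv.refl _)
      · simp only [toList, List.mem_append]
        rintro b (hb | hb)
        exacts [hC b hb, h₂ b hb]
      · exact (cutLo_union_left (le_of_lt hlt)).trans hlo
      · exact (cutHi_union_left (le_of_lt hlt)).trans (union_congr_s11 hhi GEq.rfl)
    · refine ⟨Γ₁, Γ₂, CtxEquiv.refl _, h₁, h₂, ?_, ?_⟩
      · rw [heq]
        exact (cutLo_union_left le_rfl).trans cutLo_self
      · rw [heq]
        refine (cutHi_union_right le_rfl).trans ?_
        rw [Nat.sub_self]
        exact cutHi_zero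
    · obtain ⟨A, C, hequiv, hA, hC, hlo, hhi⟩ := ih₂ h₂ _ (unionCut_union_right hcut hgt)
      refine ⟨par Γ₁ A, C, ?_, ?_, hC, ?_, ?_⟩
      · refine CtxEquiv.trans _ (par Γ₁ (par A C)) _ ?_ (CtxEquiv.parAssoc _ _ _)
        exact equiv_par_congr (CtxEquiv.refl _) hequiv
      · simp only [toList, List.mem_append]
        rintro b (hb | hb)
        exacts [h₁ b hb, hA b hb]
      · exact (cutLo_union_right (le_of_lt hgt) (by omega)).trans (union_congr_s11 GEq.rfl hlo)
      · exact (cutHi_union_right (le_of_lt hgt)).trans hhi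

open Graph in
lemma cut_join_decomp (Γ : GCtx B) :
    (∀ b ∈ Γ.toList, unr b = false) → ∀ k, (Γ.interpG unr).JoinCut k →
    ∃ Γ₁ Γ₂ : GCtx B, CtxEquiv unr Γ (comma Γ₁ Γ₂) ∧
      (∀ b ∈ Γ₁.toList, unr b = false) ∧ (∀ b ∈ Γ₂.toList, unr b = false) ∧
      GEq ((Γ.interpG unr).cutLo k) (Γ₁.interpG unr) ∧
      GEq ((Γ.interpG unr).cutHi k) (Γ₂.interpG unr) := by
  induction Γ with
  | empty =>
    intro hord k hcut
    have h0 : (interpG unr GCtx.empty).n = 0 := rfl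
    have := hcut.2.1
    omega
  | bind b =>
    intro hord k hcut
    have hb : unr b = false := hord b (by simp [toList])
    have h1 : (interpG unr (GCtx.bind b)).n = 1 := by simp [interpG, hb]
    have := hcut.1
    have := hcut.2.1
    omega
  | comma Γ₁ Γ₂ ih₁ ih₂ =>
    intro hord k hcut
    simp only [toList, List.mem_append] at hord
    have h₁ := fun b hb => hord b (Or.inl hb)
    have h₂ := fun b hb => hord b (Or.inr hb)
    simp only [interpG] at hcut ⊢
    have hkn := hcut.2.1
    have hn : ((Γ₁.interpG unr).join (Γ₂.interpG unr)).n
        = (Γ₁.interpG unr).n + (Γ₂.interpG unr).n := rfl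
    rcases Nat.lt_trichotomy k (Γ₁.interpG unr).n with hlt | heq | hgt
    · obtain ⟨A, C, hequiv, hA, hC, hlo, hhi⟩ := ih₁ h₁ k (joinCut_join_left hcut hlt)
      refine ⟨A, comma C Γ₂, ?_, hA, ?_, ?_, ?_⟩
      · refine CtxEquiv.trans _ (comma (comma A C) Γ₂) _ ?_
          (CtxEquiv.symm _ _ (CtxEquiv.commaAssoc _ _ _))
        exact equiv_comma_congr hequiv (CtxEquiv.refl _)
      · simp only [toList, List.mem_append]
        rintro b (hb | hb)
        exacts [hC b hb, h₂ b hb]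
      · exact (cutLo_join_left (le_of_lt hlt)).trans hlo
      · exact (cutHi_join_left (le_of_lt hlt)).trans (join_congr_s11 hhi GEq.rfl)
    · refine ⟨Γ₁, Γ₂, CtxEquiv.refl _, h₁, h₂, ?_, ?_⟩
      · rw [heq]
        exact (cutLo_join_left le_rfl).trans cutLo_self
      · rw [heq]
        refine (cutHi_join_right le_rfl).trans ?_
        rw [Nat.sub_self]
        exact cutHi_zero
    · obtain ⟨A, C, hequiv, hA, hC, hlo, hhi⟩ := ih₂ h₂ _ (joinCut_join_right hcut hgt)
      refine ⟨comma Γ₁ A, C, ?_, ?_, hC, ?_, ?_⟩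
      · refine CtxEquiv.trans _ (comma Γ₁ (comma A C)) _ ?_ (CtxEquiv.commaAssoc _ _ _)
        exact equiv_comma_congr (CtxEquiv.refl _) hequiv
      · simp only [toList, List.mem_append]
        rintro b (hb | hb)
        exacts [h₁ b hb, hA b hb]
      · exact (cutLo_join_right (le_of_lt hgt) (by omega)).trans (join_congr_s11 GEq.rfl hlo)
      · exact (cutHi_join_right (le_of_lt hgt)).trans hhi
  | par Γ₁ Γ₂ ih₁ ih₂ =>
    intro hord k hcut
    simp only [toList, List.mem_append] at hord
    have h₁ := fun b hb => hord b (Or.inl hb)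
    have h₂ := fun b hb => hord b (Or.inr hb)
    simp only [interpG] at hcut ⊢
    have hkn := hcut.2.1
    rcases joinCut_union hcut with hz | hz
    · have hnil : Γ₁.toList = [] :=
        List.eq_nil_of_length_eq_zero (by rw [← interp_n Γ₁ h₁]; exact hz)
      have hG := union_zero_left (G₂ := Γ₂.interpG unr) hz
      obtain ⟨A, C, hequiv, hA, hC, hlo, hhi⟩ := ih₂ h₂ k ((joinCut_congr hG).mp hcut)
      refine ⟨A, C, ?_, hA, hC, ?_, ?_⟩
      · refine CtxEquiv.trans _ Γ₂ _ ?_ hequiv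
        refine CtxEquiv.trans _ (par GCtx.empty Γ₂) _ ?_ (CtxEquiv.parId _)
        exact equiv_par_congr (CtxEquiv.symm _ _ (equiv_empty hnil)) (CtxEquiv.refl _)
      · exact (cutLo_congr hG (le_of_lt hkn)).trans hlo
      · exact (cutHi_congr hG).trans hhi
    · have hnil : Γ₂.toList = [] :=
        List.eq_nil_of_length_eq_zero (by rw [← interp_n Γ₂ h₂]; exact hz)
      have hG := union_zero_right (G₁ := Γ₁.interpG unr) hz
      obtain ⟨A, C, hequiv, hA, hC, hlo, hhi⟩ := ih₁ h₁ k ((joinCut_congr hG).mp hcut)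
      refine ⟨A, C, ?_, hA, hC, ?_, ?_⟩
      · refine CtxEquiv.trans _ Γ₁ _ ?_ hequiv
        refine CtxEquiv.trans _ (par Γ₁ GCtx.empty) _ ?_ (equiv_parIdR _)
        exact equiv_par_congr (CtxEquiv.refl _) (CtxEquiv.symm _ _ (equiv_empty hnil))
      · exact (cutLo_congr hG (le_of_lt hkn)).trans hlo
      · exact (cutHi_congr hG).trans hhi

end GCtx
open Graph in
lemma realize_correct_aux {B : Type} [Inhabited B] (unr : B → Bool) :
    ∀ (N : ℕ) (G : Graph B) (Γ : GCtx B), G.n = N →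
      GEq G (Γ.interpG unr) → (∀ b ∈ Γ.toList, unr b = false) →
      ∃ Δ : GCtx B, G.realize = some Δ ∧ CtxEquiv unr Δ Γ := by
  intro N
  induction N using Nat.strong_induction_on with
  | _ N ih =>
    intro G Γ hN hGEq hord
    have hlen : (Γ.interpG unr).n = Γ.toList.length := GCtx.interp_n Γ hord
    match hN2 : N with
    | 0 =>
      refine ⟨GCtx.empty, ?_, ?_⟩
      · rw [Graph.realize, if_pos (by omega)]
      · refine GCtx.equiv_empty (List.eq_nil_of_length_eq_zero ?_)
        have := hGEq.1
        omega
    | 1 =>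
      have hn1 : G.n = 1 := by omega
      obtain ⟨b, hb⟩ := List.length_eq_one_iff.mp
        (show Γ.toList.length = 1 by have := hGEq.1; omega)
      refine ⟨GCtx.bind (G.label 0), ?_, ?_⟩
      · rw [Graph.realize, if_neg (by omega), if_pos hn1]
      · have hl : G.label 0 = b := by
          rw [hGEq.2.1 0 (by omega), GCtx.interp_label Γ hord 0 (by rw [hlen, hb]; simp), hb]
          rfl
        rw [hl]
        exact GCtx.equiv_single hb
    | (m + 2) =>
      by_cases hu : ∃ k, G.UnionCut k
      · set k := sInf {k | G.UnionCut k} with hkdef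
        have hk : G.UnionCut k := Nat.sInf_mem hu
        have hk' : (Γ.interpG unr).UnionCut k := (unionCut_congr hGEq).mp hk
        obtain ⟨Γ₁, Γ₂, hequiv, hord1, hord2, hlo, hhi⟩ :=
          GCtx.cut_union_decomp Γ hord k hk'
        have hk1 := hk.1
        have hk2 := hk.2.1
        have hlo' : GEq (G.cutLo k) (Γ₁.interpG unr) :=
          (cutLo_congr hGEq (le_of_lt hk2)).trans hlo
        have hhi' : GEq (G.cutHi k) (Γ₂.interpG unr) :=
          (cutHi_congr hGEq).trans hhi
        obtain ⟨Δ₁, hr₁, he₁⟩ := ih k (by omega) (G.cutLo k) Γ₁ rfl hlo' hord1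
        obtain ⟨Δ₂, hr₂, he₂⟩ := ih (G.n - k) (by omega) (G.cutHi k) Γ₂ rfl hhi' hord2
        refine ⟨GCtx.par Δ₁ Δ₂, ?_, ?_⟩
        · rw [Graph.realize, if_neg (by omega), if_neg (by omega), dif_pos hu,
            ← hkdef, hr₁, hr₂]
          rfl
        · exact CtxEquiv.trans _ (GCtx.par Γ₁ Γ₂) _
            (GCtx.equiv_par_congr he₁ he₂) (CtxEquiv.symm _ _ hequiv)
      · by_cases hj : ∃ k, G.JoinCut k
        · set k := sInf {k | G.JoinCut k} with hkdef
          have hk : G.JoinCut k := Nat.sInf_mem hj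
          have hk' : (Γ.interpG unr).JoinCut k := (joinCut_congr hGEq).mp hk
          obtain ⟨Γ₁, Γ₂, hequiv, hord1, hord2, hlo, hhi⟩ :=
            GCtx.cut_join_decomp Γ hord k hk'
          have hk1 := hk.1
          have hk2 := hk.2.1
          have hlo' : GEq (G.cutLo k) (Γ₁.interpG unr) :=
            (cutLo_congr hGEq (le_of_lt hk2)).trans hlo
          have hhi' : GEq (G.cutHi k) (Γ₂.interpG unr) :=
            (cutHi_congr hGEq).trans hhi
          obtain ⟨Δ₁, hr₁, he₁⟩ := ih k (by omega) (G.cutLo k) Γ₁ rfl hlo' hord1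
          obtain ⟨Δ₂, hr₂, he₂⟩ := ih (G.n - k) (by omega) (G.cutHi k) Γ₂ rfl hhi' hord2
          refine ⟨GCtx.comma Δ₁ Δ₂, ?_, ?_⟩
          · rw [Graph.realize, if_neg (by omega), if_neg (by omega), dif_neg hu,
              dif_pos hj, ← hkdef, hr₁, hr₂]
            rfl
          · exact CtxEquiv.trans _ (GCtx.comma Γ₁ Γ₂) _
              (GCtx.equiv_comma_congr he₁ he₂) (CtxEquiv.symm _ _ hequiv)
        · exfalso
          rcases GCtx.cut_exists Γ hord (by have := hGEq.1; omega) with ⟨k, hk⟩ | ⟨k, hk⟩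
          · exact hu ⟨k, (unionCut_congr hGEq).mpr hk⟩
          · exact hj ⟨k, (joinCut_congr hGEq).mpr hk⟩
/-- **Correctness of realization.** For every context `Γ` containing no
unrestricted bindings, the realization of its graph interpretation is
defined and syntactically equivalent to `Γ`. -/
theorem realize_correct {B : Type} [Inhabited B] (unr : B → Bool) (Γ : GCtx B)
    (hord : ∀ b ∈ GCtx.toList Γ, unr b = false) :
    ∃ Δ : GCtx B, Graph.realize (GCtx.interpG unr Γ) = some Δ ∧
      CtxEquiv unr Δ Γ := by

  obtain ⟨Δ, h1, h2⟩ := realize_correct_aux unr (Γ.interpG unr).n (Γ.interpG unr) Γ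
    rfl Graph.GEq.rfl hord
  exact ⟨Δ, h1, h2⟩
end LawOrder
end
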